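/- arXiv:2003.01272 — 3 statements merged into one kernel-verified Lean document; each statement's English description precedes it below -/
import Mathlib

section
/- If ⟨Tₙ : n < ω⟩ is a countable sequence of Kurepa trees and μ is a cardinal of cofinality ω such that the cardinalities |B(Tₙ)| are cofinal in μ (each is < μ and their supremum is μ), then there is a Kurepa tree whose set of cofinal branches has cardinality exactly μ. -/
open Cardinal

/-- The first uncountable ordinal ω₁. -/
noncomputable def omega1 : Ordinal.{0} := (Cardinal.aleph 1).ord

/-- `heightIs x α` : the set of predecessors of `x` has order type `α`
(in particular it is well-ordered). -/
def heightIs {T : Type} [PartialOrder T] (x : T) (α : Ordinal.{0}) : Prop :=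
  Nonempty ({y : T // y < x} ≃o Set.Iio α)

/-- `T` is a tree of height ω₁ : every point has a well-ordered set of predecessors of
some order type `< ω₁`, and every level `< ω₁` is nonempty. -/
def IsTreeOfHeightOmega1 (T : Type) [PartialOrder T] : Prop :=
  (∀ x : T, ∃ α < omega1, heightIs x α) ∧ ∀ α < omega1, ∃ x : T, heightIs x α

/-- all levels of `T` are countable -/
def CountableLevels (T : Type) [PartialOrder T] : Prop :=
  ∀ α : Ordinal.{0}, {x : T | heightIs x α}.Countable

/-- A cofinal branch: a chain of order type ω₁. -/
def IsCofinalBranch {T : Type} [PartialOrder T] (B : Set T) : Prop :=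
  IsChain (· ≤ ·) B ∧ Nonempty (B ≃o Set.Iio omega1)

/-- The cardinality of the set of cofinal branches of `T`. -/
noncomputable def branchCard (T : Type) [PartialOrder T] : Cardinal :=
  Cardinal.mk {B : Set T // IsCofinalBranch B}

/-- A Kurepa tree: a tree of height ω₁, all levels countable, with more than ω₁-many
cofinal branches. -/
def IsKurepaTree (T : Type) [PartialOrder T] : Prop :=
  IsTreeOfHeightOmega1 T ∧ CountableLevels T ∧ Cardinal.aleph 1 < branchCard T


section aux
variable {T : ℕ → Type} [∀ n, PartialOrder (T n)]

noncomputable def imageIso (n : ℕ) (B : Set (T n)) :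
    B ≃o (Sigma.mk n '' B : Set (Σ n, T n)) where
  toEquiv := Equiv.Set.image _ _ sigma_mk_injective
  map_rel_iff' := by
    intro a b
    simp [Equiv.Set.image, Equiv.Set.imageOfInjOn, Sigma.mk_le_mk_iff]

lemma pred_eq (n : ℕ) (x : T n) :
    {y : Σ m, T m | y < ⟨n, x⟩} = Sigma.mk n '' {y | y < x} := by
  ext ⟨m, b⟩
  constructor
  · intro h
    obtain ⟨h1, -⟩ := Sigma.lt_def.1 h
    dsimp at h1
    subst h1
    exact ⟨b, (Sigma.mk_lt_mk_iff (α := T)).1 h, rfl⟩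
  · rintro ⟨a, ha, h⟩
    cases h
    exact Sigma.mk_lt_mk_iff.2 ha

noncomputable def predIso (n : ℕ) (x : T n) :
    {y : Σ m, T m // y < ⟨n, x⟩} ≃o {y : T n // y < x} :=
  (OrderIso.setCongr _ _ (pred_eq n x)).trans (imageIso n {y | y < x}).symm

lemma heightIs_sigma (n : ℕ) (x : T n) (α : Ordinal.{0}) :
    heightIs (⟨n, x⟩ : Σ m, T m) α ↔ heightIs x α := by
  constructor
  · rintro ⟨e⟩; exact ⟨(predIso n x).symm.trans e⟩
  · rintro ⟨e⟩; exact ⟨(predIso n x).trans e⟩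

lemma isCofinalBranch_image (n : ℕ) (B : Set (T n)) :
    IsCofinalBranch (Sigma.mk n '' B) ↔ IsCofinalBranch B := by
  constructor
  · rintro ⟨hc, ⟨e⟩⟩
    refine ⟨?_, ⟨(imageIso n B).trans e⟩⟩
    intro a ha b hb hab
    have := hc (Set.mem_image_of_mem _ ha) (Set.mem_image_of_mem _ hb)
      (fun h => hab (sigma_mk_injective h))
    rcases this with h | h
    · exact Or.inl ((Sigma.mk_le_mk_iff (α := T)).1 h)
    · exact Or.inr ((Sigma.mk_le_mk_iff (α := T)).1 h)
  · rintro ⟨hc, ⟨e⟩⟩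
    refine ⟨?_, ⟨(imageIso n B).symm.trans e⟩⟩
    rintro _ ⟨a, ha, rfl⟩ _ ⟨b, hb, rfl⟩ hab
    rcases hc ha hb (fun h => hab (by rw [h])) with h | h
    · exact Or.inl ((Sigma.mk_le_mk_iff (α := T)).2 h)
    · exact Or.inr ((Sigma.mk_le_mk_iff (α := T)).2 h)

lemma omega1_pos : (0 : Ordinal.{0}) < omega1 := by
  rw [omega1, ← Cardinal.ord_zero]
  exact Cardinal.ord_lt_ord.2 (aleph_pos 1)

lemma branch_nonempty {S : Type} [PartialOrder S] {B : Set S}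
    (h : IsCofinalBranch B) : B.Nonempty := by
  obtain ⟨e⟩ := h.2
  exact ⟨e.symm ⟨0, omega1_pos⟩, (e.symm ⟨0, omega1_pos⟩).2⟩

noncomputable def branchEquiv :
    (Σ n, {B : Set (T n) // IsCofinalBranch B}) ≃
      {B : Set (Σ n, T n) // IsCofinalBranch B} := by
  refine Equiv.ofBijective
    (fun p => ⟨Sigma.mk p.1 '' p.2.1, (isCofinalBranch_image p.1 p.2.1).2 p.2.2⟩) ⟨?_, ?_⟩
  · rintro ⟨n, B, hB⟩ ⟨m, B', hB'⟩ h
    simp only [Subtype.mk.injEq] at h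
    obtain ⟨a, ha⟩ := branch_nonempty hB
    have hmem : (⟨n, a⟩ : Σ k, T k) ∈ Sigma.mk m '' B' := by
      rw [← h]; exact Set.mem_image_of_mem _ ha
    obtain ⟨b, -, hb⟩ := hmem
    obtain ⟨rfl, -⟩ := Sigma.mk.inj_iff.1 hb.symm
    have hBB : B = B' := Set.image_injective.2 sigma_mk_injective h
    subst hBB
    rfl
  · rintro ⟨C, hC⟩
    obtain ⟨⟨n, a⟩, ha⟩ := branch_nonempty hC
    have hfst : ∀ y ∈ C, Sigma.fst y = n := by
      rintro ⟨m, b⟩ hy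
      by_cases hne : (⟨m, b⟩ : Σ k, T k) = ⟨n, a⟩
      · exact congrArg Sigma.fst hne
      · rcases hC.1 hy ha hne with h | h
        · exact (Sigma.le_def.1 h).1
        · exact ((Sigma.le_def.1 h).1).symm
    have hCeq : C = Sigma.mk n '' {x | (⟨n, x⟩ : Σ k, T k) ∈ C} := by
      ext ⟨m, b⟩
      constructor
      · intro h
        have hm := hfst _ h
        dsimp at hm
        subst hm
        exact ⟨b, h, rfl⟩
      · rintro ⟨x, hx, heq⟩
        cases heq
        exact hx
    refine ⟨⟨n, ⟨{x | (⟨n, x⟩ : Σ k, T k) ∈ C}, ?_⟩⟩, ?_⟩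
    · exact (isCofinalBranch_image n _).1 (hCeq ▸ hC)
    · exact Subtype.ext hCeq.symm

lemma branchCard_sigma :
    branchCard (Σ n, T n) = Cardinal.sum (fun n => branchCard (T n)) := by
  rw [branchCard, ← Cardinal.mk_congr (branchEquiv (T := T)), Cardinal.mk_sigma]
  rfl

end aux

/-- if `⟨Tₙ : n < ω⟩` is a countable sequence of Kurepa trees and `μ` is a
cardinal of cofinality ω such that the branch cardinalities `|B(Tₙ)|` are cofinal in `μ`
(each `< μ`, supremum `= μ`), then there is a Kurepa tree with exactly `μ`-many cofinal
branches. -/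
theorem statement1 (T : ℕ → Type) [∀ n, PartialOrder (T n)]
    (hK : ∀ n, IsKurepaTree (T n))
    (μ : Cardinal) (hμ : μ.ord.cof = Cardinal.aleph0)
    (hlt : ∀ n, branchCard (T n) < μ)
    (hsup : (⨆ n, branchCard (T n)) = μ) :
    ∃ (S : Type) (_ : PartialOrder S), IsKurepaTree S ∧ branchCard S = μ := by
  refine ⟨Σ n, T n, inferInstance, ?_, ?_⟩
  case refine_2 =>
    rw [branchCard_sigma]
    apply le_antisymm
    · have h1 : Cardinal.sum (fun n => branchCard (T n)) ≤ #ℕ * ⨆ n, branchCard (T n) :=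
        Cardinal.sum_le_mk_mul_iSup _
      rw [hsup, Cardinal.mk_nat] at h1
      have hμ0 : ℵ₀ ≤ μ := by
        rw [← hsup]
        exact le_trans (aleph0_le_aleph 1) ((le_of_lt (hK 0).2.2).trans (le_ciSup (Cardinal.bddAbove_range _) 0))
      calc Cardinal.sum (fun n => branchCard (T n)) ≤ ℵ₀ * μ := h1
        _ = μ := by
            rw [Cardinal.mul_eq_max (le_refl ℵ₀) hμ0]
            exact max_eq_right hμ0
    · rw [← hsup]
      exact ciSup_le' fun n => Cardinal.le_sum _ n
  case refine_1 =>
    refine ⟨⟨?_, ?_⟩, ?_, ?_⟩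
    · rintro ⟨n, x⟩
      obtain ⟨α, hα, h⟩ := (hK n).1.1 x
      exact ⟨α, hα, (heightIs_sigma n x α).2 h⟩
    · intro α hα
      obtain ⟨x, hx⟩ := (hK 0).1.2 α hα
      exact ⟨⟨0, x⟩, (heightIs_sigma 0 x α).2 hx⟩
    · intro α
      have heq : {p : Σ n, T n | heightIs p α} = ⋃ n, Sigma.mk n '' {x | heightIs x α} := by
        ext ⟨n, x⟩
        constructor
        · intro h
          exact Set.mem_iUnion.2 ⟨n, x, (heightIs_sigma n x α).1 h, rfl⟩
        · intro h
          obtain ⟨m, a, ha, heq2⟩ := Set.mem_iUnion.1 h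
          cases heq2
          exact (heightIs_sigma _ _ α).2 ha
      rw [heq]
      exact Set.countable_iUnion fun n => ((hK n).2.1 α).image _
    · calc Cardinal.aleph 1 < branchCard (T 0) := (hK 0).2.2
        _ ≤ Cardinal.sum (fun n => branchCard (T n)) := Cardinal.le_sum _ 0
        _ = branchCard (Σ n, T n) := (branchCard_sigma).symm
end

section
/- Let κ be an infinite cardinal and θ > κ a regular cardinal satisfying |α^{<κ}| < θ for all α < θ. If A is a family of sets with |A| ≥ θ and every member of A has cardinality < κ, then there is a subfamily D ⊆ A with |D| = θ forming a Δ-system: there is a kernel y such that x ∩ x' = y for all distinct x, x' ∈ D. -/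
open Cardinal Ordinal Set

section DeltaAux

variable {ι : Type} [LinearOrder ι] [WellFoundedLT ι]

/-- The order type of a subset of a well-ordered type. -/
noncomputable def setOT (s : Set ι) : Ordinal :=
  Ordinal.type (Subrel ((· < ·) : ι → ι → Prop) (· ∈ s))

/-- The `β`-th element of a subset of a well-ordered type. -/
noncomputable def setNth (s : Set ι) (β : Ordinal) (h : β < setOT s) : ι :=
  (Ordinal.enum (Subrel ((· < ·) : ι → ι → Prop) (· ∈ s)) ⟨β, h⟩).1

theorem setNth_mem (s : Set ι) (β : Ordinal) (h : β < setOT s) : setNth s β h ∈ s :=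
  (Ordinal.enum (Subrel ((· < ·) : ι → ι → Prop) (· ∈ s)) ⟨β, h⟩).2

theorem setNth_lt_setNth {s : Set ι} {β γ : Ordinal} (h1 : β < setOT s) (h2 : γ < setOT s) :
    setNth s β h1 < setNth s γ h2 ↔ β < γ := by
  rw [setNth, setNth, ← subrel_val ((· < ·) : ι → ι → Prop) s]
  exact (Ordinal.enum_lt_enum (r := Subrel ((· < ·) : ι → ι → Prop) (· ∈ s))).trans Subtype.mk_lt_mk

theorem setNth_surj (s : Set ι) {a : ι} (ha : a ∈ s) :
    ∃ β h, setNth s β h = a := by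
  refine ⟨Ordinal.typein (Subrel ((· < ·) : ι → ι → Prop) (· ∈ s)) ⟨a, ha⟩,
    Ordinal.typein_lt_type _ _, ?_⟩
  exact congrArg Subtype.val
    (Ordinal.enum_typein (Subrel ((· < ·) : ι → ι → Prop) (· ∈ s)) ⟨a, ha⟩)

theorem card_setOT (s : Set ι) : (setOT s).card = #s := Ordinal.card_type _

end DeltaAux

/-- Any subset of `θ.ord.ToType` of cardinality `< θ` (θ regular) is strictly bounded. -/
theorem exists_bound_toType (θ : Cardinal.{0}) (hθ : θ.IsRegular) (s : Set θ.ord.ToType)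
    (hs : #s < θ) : ∃ b : θ.ord.ToType, ∀ a ∈ s, a < b := by
  haveI : IsWellOrder θ.ord.ToType ((· < ·) : θ.ord.ToType → θ.ord.ToType → Prop) :=
    isWellOrder_lt
  have hlim : Order.IsSuccLimit θ.ord := Cardinal.isSuccLimit_ord hθ.aleph0_le
  set f : s → Ordinal := fun a => Ordinal.typein ((· < ·) : θ.ord.ToType → θ.ord.ToType → Prop) a.1 with hf
  have hsup : (⨆ a, f a) < θ.ord :=
    Cardinal.iSup_lt_ord_of_isRegular hθ hs fun a => Ordinal.typein_lt_self _
  have hsucc : Order.succ (⨆ a, f a) < θ.ord := hlim.succ_lt hsup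
  refine ⟨Ordinal.enum ((· < ·) : θ.ord.ToType → θ.ord.ToType → Prop)
    ⟨Order.succ (⨆ a, f a), by rwa [Set.mem_Iio, Ordinal.type_toType]⟩, fun a ha => ?_⟩
  erw [← Ordinal.typein_lt_typein ((· < ·) : θ.ord.ToType → θ.ord.ToType → Prop), Ordinal.typein_enum]
  exact Order.lt_succ_of_le (Ordinal.le_iSup f ⟨a, ha⟩)

/-- Any `κ`-indexed family in `θ.ord.ToType` (κ < θ regular) is strictly dominated. -/
theorem exists_dominating (θ : Cardinal.{0}) (hθ : θ.IsRegular) {κ : Cardinal.{0}} (hκθ : κ < θ)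
    (Γ : κ.ord.ToType → θ.ord.ToType) : ∃ b : θ.ord.ToType, ∀ j, Γ j < b := by
  obtain ⟨b, hb⟩ := exists_bound_toType θ hθ (Set.range Γ)
    (mk_range_le.trans_lt (by rw [Cardinal.mk_toType, Cardinal.card_ord]; exact hκθ))
  exact ⟨b, fun j => hb _ (Set.mem_range_self j)⟩

theorem mk_Iio_toType_lt (θ : Cardinal.{0}) (j : θ.ord.ToType) : #(Set.Iio j) < θ := by
  haveI : IsWellOrder θ.ord.ToType ((· < ·) : θ.ord.ToType → θ.ord.ToType → Prop) :=
    isWellOrder_lt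
  have h1 : #(Set.Iio j) = (Ordinal.typein ((· < ·) : θ.ord.ToType → θ.ord.ToType → Prop) j).card := by
    rw [Ordinal.card_typein]
    exact mk_congr (Equiv.subtypeEquivRight fun _ => Iff.rfl)
  rw [h1]
  exact Cardinal.card_typein_toType_lt θ j

/-- Regular pigeonhole. -/
theorem regular_pigeon {α β : Type} {θ : Cardinal.{0}} (hθ : θ.IsRegular) (S : Set α) (hS : θ ≤ #S)
    (f : α → β) (hb : #(f '' S) < θ) : ∃ b, θ ≤ #({a ∈ S | f a = b}) := by
  by_contra hcon
  push_neg at hcon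
  have hUnion : S ⊆ ⋃ b ∈ f '' S, {a ∈ S | f a = b} := fun a ha =>
    Set.mem_biUnion (Set.mem_image_of_mem f ha) ⟨ha, rfl⟩
  have h1 : #S ≤ #(f '' S) * ⨆ b : f '' S, #({a ∈ S | f a = b.1}) :=
    (mk_le_mk_of_subset hUnion).trans (mk_biUnion_le _ _)
  have h2 : ⨆ b : f '' S, #({a ∈ S | f a = b.1}) < θ :=
    Cardinal.iSup_lt_of_isRegular hθ hb fun b => hcon b.1
  exact absurd (hS.trans h1) (not_le.2 (Cardinal.mul_lt_of_lt hθ.aleph0_le hb h2))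

/-- Counting bounded small subsets. -/
theorem count_small {ι : Type} (θ κ : Cardinal.{0}) (hθ : θ.IsRegular) (hκ0 : ℵ₀ ≤ κ)
    (hκθ : κ < θ) (hpow : ∀ α < θ, α ^< κ < θ) (Δ : Set ι) (hΔ : #Δ < θ) :
    #{t : Set ι | t ⊆ Δ ∧ #t < κ} < θ := by
  haveI : IsWellOrder κ.ord.ToType ((· < ·) : κ.ord.ToType → κ.ord.ToType → Prop) :=
    isWellOrder_lt
  have hθ0 : ℵ₀ < θ := hκ0.trans_lt hκθ
  have hM : (max #Δ ℵ₀) ^< κ < θ := hpow _ (max_lt hΔ hθ0)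
  have hκo : κ.ord ≠ 0 := fun h =>
    (Cardinal.aleph0_pos.trans_le hκ0).ne' (Cardinal.ord_eq_zero.1 h)
  set c : κ.ord.ToType → Cardinal :=
    fun j => (Ordinal.typein ((· < ·) : κ.ord.ToType → κ.ord.ToType → Prop) j).card with hc
  have hcover : {t : Set ι | t ⊆ Δ ∧ #t < κ} ⊆ ⋃ j, {t : Set ι | t ⊆ Δ ∧ #t ≤ c j} := by
    rintro t ⟨ht1, ht2⟩
    have h1 : (#t).ord < κ.ord := Cardinal.ord_lt_ord.2 ht2
    refine Set.mem_iUnion.2 ⟨Ordinal.enum ((· < ·) : κ.ord.ToType → κ.ord.ToType → Prop)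
      ⟨(#t).ord, by rwa [Set.mem_Iio, Ordinal.type_toType]⟩, ht1, ?_⟩
    rw [hc]
    dsimp only; erw [Ordinal.typein_enum]; simp only [Cardinal.card_ord]
    exact le_rfl
  have hcj : ∀ j, c j < κ := fun j => Cardinal.lt_ord.1 (Ordinal.typein_lt_self j)
  have hbound : ∀ j, #{t : Set ι | t ⊆ Δ ∧ #t ≤ c j} ≤ (max #Δ ℵ₀) ^< κ := fun j =>
    (Cardinal.mk_bounded_subset_le Δ (c j)).trans (Cardinal.le_powerlt _ (hcj j))
  calc #{t : Set ι | t ⊆ Δ ∧ #t < κ}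
      ≤ #(⋃ j, {t : Set ι | t ⊆ Δ ∧ #t ≤ c j}) := mk_le_mk_of_subset hcover
    _ ≤ #(κ.ord.ToType) * ⨆ j, #{t : Set ι | t ⊆ Δ ∧ #t ≤ c j} := mk_iUnion_le _
    _ ≤ κ * ((max #Δ ℵ₀) ^< κ) := by
        rw [Cardinal.mk_toType, Cardinal.card_ord]
        exact mul_le_mul_right (ciSup_le' hbound) _
    _ < θ := Cardinal.mul_lt_of_lt hθ.aleph0_le hκθ hM

/-- The transfinite choice sequence. -/
noncomputable def seqC {ι : Type} [LinearOrder ι] [WellFoundedLT ι] [Nonempty ι]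
    (Y : ι → Set ι) (S : Set ι) (v : ι → ι) : ι → ι :=
  WellFoundedLT.fix fun j ih =>
    Classical.epsilon fun i => i ∈ S ∧ ∀ k, ∀ hk : k < j, ∀ a ∈ Y (ih k hk), a < v i

theorem seqC_eq {ι : Type} [LinearOrder ι] [WellFoundedLT ι] [Nonempty ι]
    (Y : ι → Set ι) (S : Set ι) (v : ι → ι) (j : ι) :
    seqC Y S v j =
      Classical.epsilon fun i => i ∈ S ∧ ∀ k, ∀ _ : k < j, ∀ a ∈ Y (seqC Y S v k), a < v i :=
  WellFoundedLT.fix_eq _ j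

set_option maxHeartbeats 2000000 in
theorem delta_core (κ θ : Cardinal.{0}) (hκ : κ.IsRegular) (hθ : θ.IsRegular) (hκθ : κ < θ)
    (hpow : ∀ α < θ, α ^< κ < θ) (Y : θ.ord.ToType → Set θ.ord.ToType)
    (S : Set θ.ord.ToType) (hScard : θ ≤ #S)
    (hYsmall : ∀ i ∈ S, #(Y i) < κ) (hYinj : Set.InjOn Y S) :
    ∃ T ⊆ S, θ ≤ #T ∧ ∃ c, ∀ i ∈ T, ∀ j ∈ T, i ≠ j → Y i ∩ Y j = c := by
  classical
  haveI iwoθ : IsWellOrder θ.ord.ToType ((· < ·) : θ.ord.ToType → θ.ord.ToType → Prop) :=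
    isWellOrder_lt
  haveI iwoκ : IsWellOrder κ.ord.ToType ((· < ·) : κ.ord.ToType → κ.ord.ToType → Prop) :=
    isWellOrder_lt
  have hθ0 : ℵ₀ ≤ θ := hθ.aleph0_le
  have hκ0 : ℵ₀ ≤ κ := hκ.aleph0_le
  haveI hκne : Nonempty κ.ord.ToType := Ordinal.nonempty_toType_iff.2
    (fun h => (Cardinal.aleph0_pos.trans_le hκ0).ne' (Cardinal.ord_eq_zero.1 h))
  haveI hθne : Nonempty θ.ord.ToType := Ordinal.nonempty_toType_iff.2
    (fun h => (Cardinal.aleph0_pos.trans_le hθ0).ne' (Cardinal.ord_eq_zero.1 h))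
  have hmkθ : #θ.ord.ToType = θ := by rw [Cardinal.mk_toType, Cardinal.card_ord]
  have hmkκ : #κ.ord.ToType = κ := by rw [Cardinal.mk_toType, Cardinal.card_ord]
  -- Step 1: a `θ`-sized subfamily with a common order type `ρ`.
  set q1 : θ.ord.ToType → κ.ord.ToType := fun i =>
    if h : setOT (Y i) < κ.ord then
      Ordinal.enum ((· < ·) : κ.ord.ToType → κ.ord.ToType → Prop)
        ⟨setOT (Y i), by rwa [Set.mem_Iio, Ordinal.type_toType]⟩
    else Classical.arbitrary _ with hq1
  obtain ⟨j₁, hS₁card⟩ := regular_pigeon hθ S hScard q1 (by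
    refine lt_of_le_of_lt (mk_le_mk_of_subset (Set.subset_univ _)) ?_
    rw [Cardinal.mk_univ, hmkκ]; exact hκθ)
  set S₁ := {i ∈ S | q1 i = j₁} with hS₁
  have hS₁S : S₁ ⊆ S := Set.sep_subset _ _
  set ρ := Ordinal.typein ((· < ·) : κ.ord.ToType → κ.ord.ToType → Prop) j₁ with hρ
  have hρκ : ρ < κ.ord := Ordinal.typein_lt_self j₁
  have hOT : ∀ i ∈ S₁, setOT (Y i) = ρ := by
    intro i hi
    have hlt : setOT (Y i) < κ.ord :=
      Cardinal.lt_ord.2 (by rw [card_setOT]; exact hYsmall i hi.1)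
    have h2 : q1 i = Ordinal.enum ((· < ·) : κ.ord.ToType → κ.ord.ToType → Prop)
        ⟨setOT (Y i), by rwa [Set.mem_Iio, Ordinal.type_toType]⟩ := by
      rw [hq1]; exact dif_pos hlt
    have h3 := hi.2
    rw [h2] at h3
    have h4 := congrArg (Ordinal.typein ((· < ·) : κ.ord.ToType → κ.ord.ToType → Prop)) h3
    erw [Ordinal.typein_enum] at h4; assumption
  -- Step 2: some position is unbounded.
  have hUnbEx : ∃ β, β < ρ ∧ ∀ γ : θ.ord.ToType, ∃ i ∈ S₁,
      ∃ h : β < setOT (Y i), γ < setNth (Y i) β h := by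
    by_contra hcon
    push_neg at hcon
    choose Γ hΓ using hcon
    obtain ⟨b, hb⟩ := exists_dominating θ hθ hκθ (fun j =>
      if h : Ordinal.typein ((· < ·) : κ.ord.ToType → κ.ord.ToType → Prop) j < ρ
      then Γ _ h else Classical.arbitrary _)
    have hbound : ∀ i ∈ S₁, Y i ⊆ Set.Iio b := by
      intro i hi a ha
      obtain ⟨β, hβ, rfl⟩ := setNth_surj (Y i) ha
      have hβρ : β < ρ := by rw [← hOT i hi]; exact hβ
      have hβκ : β < κ.ord := hβρ.trans hρκ
      have h1 : setNth (Y i) β hβ ≤ Γ β hβρ := hΓ β hβρ i hi hβ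
      have h2 : (if h : Ordinal.typein ((· < ·) : κ.ord.ToType → κ.ord.ToType → Prop)
          (Ordinal.enum ((· < ·) : κ.ord.ToType → κ.ord.ToType → Prop)
            ⟨β, by rwa [Set.mem_Iio, Ordinal.type_toType]⟩) < ρ
          then Γ _ h else Classical.arbitrary _) = Γ β hβρ := by
        erw [Ordinal.typein_enum]
        rw [dif_pos hβρ]
      exact lt_of_le_of_lt h1
        (h2 ▸ hb (Ordinal.enum _ ⟨β, by rwa [Set.mem_Iio, Ordinal.type_toType]⟩))
    have himg : θ ≤ #(Y '' S₁) := by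
      rw [mk_image_eq_of_injOn _ _ (hYinj.mono hS₁S)]; exact hS₁card
    have hsub : Y '' S₁ ⊆ {t | t ⊆ Set.Iio b ∧ #t < κ} := by
      rintro t ⟨i, hi, rfl⟩
      exact ⟨hbound i hi, hYsmall i (hS₁S hi)⟩
    exact absurd (himg.trans (mk_le_mk_of_subset hsub))
      (not_le.2 (count_small θ κ hθ hκ0 hκθ hpow (Set.Iio b) (mk_Iio_toType_lt θ b)))
  -- Step 3: the least unbounded position `β₀` and the bound `δ` below it.
  set B := {β | β < ρ ∧ ∀ γ : θ.ord.ToType, ∃ i ∈ S₁,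
    ∃ h : β < setOT (Y i), γ < setNth (Y i) β h} with hB
  have hBne : B.Nonempty := hUnbEx
  set β₀ := sInf B with hβ₀def
  obtain ⟨hβ₀ρ, hUnb⟩ := csInf_mem hBne
  have hminB : ∀ β, β < β₀ → ∃ γ : θ.ord.ToType, ∀ i ∈ S₁,
      ∀ h : β < setOT (Y i), setNth (Y i) β h ≤ γ := by
    intro β hβ
    have hβρ : β < ρ := hβ.trans hβ₀ρ
    have hnot : β ∉ B := fun hmem => (csInf_le (OrderBot.bddBelow B) hmem).not_gt hβ
    rw [hB, Set.mem_setOf_eq] at hnot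
    push_neg at hnot
    exact hnot hβρ
  choose Γ₂ hΓ₂ using hminB
  obtain ⟨δ, hδdom⟩ := exists_dominating θ hθ hκθ (fun j =>
    if h : Ordinal.typein ((· < ·) : κ.ord.ToType → κ.ord.ToType → Prop) j < β₀
    then Γ₂ _ h else Classical.arbitrary _)
  have hδ : ∀ i ∈ S₁, ∀ β, ∀ hβ : β < β₀, ∀ h : β < setOT (Y i), setNth (Y i) β h < δ := by
    intro i hi β hβ h
    have hβκ : β < κ.ord := (hβ.trans_le hβ₀ρ.le).trans hρκ
    have h2 : (if hh : Ordinal.typein ((· < ·) : κ.ord.ToType → κ.ord.ToType → Prop)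
        (Ordinal.enum ((· < ·) : κ.ord.ToType → κ.ord.ToType → Prop)
          ⟨β, by rwa [Set.mem_Iio, Ordinal.type_toType]⟩) < β₀
        then Γ₂ _ hh else Classical.arbitrary _) = Γ₂ β hβ := by
      erw [Ordinal.typein_enum]
      rw [dif_pos hβ]
    exact lt_of_le_of_lt (hΓ₂ β hβ i hi h)
      (h2 ▸ hδdom (Ordinal.enum _ ⟨β, by rwa [Set.mem_Iio, Ordinal.type_toType]⟩))
  -- Step 4: transfinite recursion.
  set vE : θ.ord.ToType → θ.ord.ToType := fun i =>
    if h : β₀ < setOT (Y i) then setNth (Y i) β₀ h else δ with hvEdef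
  have hβ₀OT : ∀ i ∈ S₁, β₀ < setOT (Y i) := fun i hi => by rw [hOT i hi]; exact hβ₀ρ
  have hvE : ∀ i ∈ S₁, ∀ h : β₀ < setOT (Y i), vE i = setNth (Y i) β₀ h := by
    intro i hi h
    simp only [hvEdef]
    rw [dif_pos h]
  have hvEmem : ∀ i ∈ S₁, vE i ∈ Y i := fun i hi => by
    rw [hvE i hi (hβ₀OT i hi)]; exact setNth_mem _ _ _
  set G := seqC Y S₁ vE with hGdef
  have hG : ∀ j, G j ∈ S₁ ∧ ∀ k, k < j → ∀ a ∈ Y (G k), a < vE (G j) := by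
    intro j
    refine wellFounded_lt.induction
      (C := fun j => G j ∈ S₁ ∧ ∀ k, k < j → ∀ a ∈ Y (G k), a < vE (G j)) j ?_
    intro j IH
    have hUb : #(⋃ k ∈ Set.Iio j, Y (G k)) < θ := by
      have h1 : #(⋃ k ∈ Set.Iio j, Y (G k)) ≤ #(Set.Iio j) * ⨆ k : Set.Iio j, #(Y (G k.1)) :=
        mk_biUnion_le _ _
      have h2 : (⨆ k : Set.Iio j, #(Y (G k.1))) ≤ κ :=
        ciSup_le' fun k => (hYsmall _ (hS₁S (IH k.1 (Set.mem_Iio.1 k.2)).1)).le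
      exact lt_of_le_of_lt h1 (Cardinal.mul_lt_of_lt hθ0 (mk_Iio_toType_lt θ j)
        (h2.trans_lt hκθ))
    obtain ⟨b, hb⟩ := exists_bound_toType θ hθ _ hUb
    obtain ⟨i, hiS₁, hih, hilt⟩ := hUnb b
    have hspec : ∃ i, i ∈ S₁ ∧ ∀ k, ∀ hk : k < j, ∀ a ∈ Y (seqC Y S₁ vE k), a < vE i := by
      refine ⟨i, hiS₁, fun k hk a ha => ?_⟩
      have h1 : a < b := hb a (Set.mem_biUnion hk ha)
      have h2 : vE i = setNth (Y i) β₀ hih := hvE i hiS₁ hih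
      rw [h2]; exact h1.trans hilt
    have hGj := Classical.epsilon_spec hspec
    rw [hGdef, seqC_eq]
    exact ⟨hGj.1, fun k hk a ha => hGj.2 k hk a ha⟩
  have hGS₁ : ∀ j, G j ∈ S₁ := fun j => (hG j).1
  have hGmono : ∀ k j, k < j → vE (G k) < vE (G j) := fun k j hkj =>
    (hG j).2 k hkj _ (hvEmem _ (hGS₁ k))
  have hGinj : Function.Injective G := by
    intro k j hkj
    by_contra hne
    rcases lt_or_gt_of_ne hne with h | h
    · exact absurd (hkj ▸ hGmono k j h) (lt_irrefl _)
    · exact absurd (hkj ▸ hGmono j k h) (lt_irrefl _)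
  have hInter : ∀ k j, k < j → Y (G k) ∩ Y (G j) ⊆ Set.Iio δ := by
    intro k j hkj a ha
    obtain ⟨hak, haj⟩ := ha
    obtain ⟨β, hβ, heq⟩ := setNth_surj (Y (G j)) haj
    have h1 : a < vE (G j) := (hG j).2 k hkj a hak
    rw [hvE _ (hGS₁ j) (hβ₀OT _ (hGS₁ j)), ← heq] at h1
    have hββ₀ : β < β₀ := (setNth_lt_setNth hβ (hβ₀OT _ (hGS₁ j))).1 h1
    rw [← heq]
    exact Set.mem_Iio.2 (hδ _ (hGS₁ j) β hββ₀ hβ)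
  -- Step 5: final pigeonhole on the kernels below `δ`.
  have hrange : θ ≤ #(Set.range G) := by
    rw [Cardinal.mk_range_eq _ hGinj, hmkθ]
  have himg2 : #((fun i => Y i ∩ Set.Iio δ) '' Set.range G) < θ := by
    refine lt_of_le_of_lt (mk_le_mk_of_subset ?_)
      (count_small θ κ hθ hκ0 hκθ hpow (Set.Iio δ) (mk_Iio_toType_lt θ δ))
    rintro t ⟨i, ⟨j, rfl⟩, rfl⟩
    exact ⟨Set.inter_subset_right, (mk_le_mk_of_subset Set.inter_subset_left).trans_lt
      (hYsmall _ (hS₁S (hGS₁ j)))⟩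
  obtain ⟨c₀, hc₀⟩ := regular_pigeon hθ (Set.range G) hrange (fun i => Y i ∩ Set.Iio δ) himg2
  refine ⟨{a ∈ Set.range G | (fun i => Y i ∩ Set.Iio δ) a = c₀}, ?_, hc₀, c₀, ?_⟩
  · rintro i ⟨⟨j, rfl⟩, _⟩
    exact hS₁S (hGS₁ j)
  · rintro i ⟨⟨k, rfl⟩, hik⟩ i' ⟨⟨j, rfl⟩, hjk⟩ hne
    have hik' : Y (G k) ∩ Set.Iio δ = c₀ := hik
    have hjk' : Y (G j) ∩ Set.Iio δ = c₀ := hjk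
    have hkj : k ≠ j := fun h => hne (by rw [h])
    have hsub : Y (G k) ∩ Y (G j) ⊆ Set.Iio δ := by
      rcases hkj.lt_or_gt with h | h
      · exact hInter k j h
      · rw [Set.inter_comm]; exact hInter j k h
    apply Set.Subset.antisymm
    · intro a ha
      have h3 : a ∈ Set.Iio δ := hsub ha
      rw [← hik']
      exact ⟨ha.1, h3⟩
    · intro a ha
      have h1 : a ∈ Y (G k) ∩ Set.Iio δ := hik' ▸ ha
      have h2 : a ∈ Y (G j) ∩ Set.Iio δ := hjk' ▸ ha
      exact ⟨h1.1, h2.1⟩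

set_option maxHeartbeats 1000000 in
/-- generalized Δ-system lemma: let `κ` be an infinite cardinal and
`θ > κ` regular with `α ^< κ < θ` for all `α < θ` (where `α ^< κ` is the cardinality of
the set of `<κ`-sequences in `α`).  If `A` is a family of sets with `|A| ≥ θ` whose
members all have cardinality `< κ`, then some subfamily `D ⊆ A` with `|D| = θ` forms a
Δ-system: there is a kernel `y` with `x ∩ x' = y` for all distinct `x, x' ∈ D`. -/
theorem statement2 {X : Type} (κ θ : Cardinal)
    (hκ : Cardinal.aleph0 ≤ κ) (hθ : θ.IsRegular) (hκθ : κ < θ)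
    (hpow : ∀ α < θ, α ^< κ < θ)
    (A : Set (Set X)) (hA : θ ≤ Cardinal.mk A)
    (hsmall : ∀ x ∈ A, Cardinal.mk x < κ) :
    ∃ D ⊆ A, Cardinal.mk D = θ ∧
      ∃ y : Set X, ∀ x ∈ D, ∀ x' ∈ D, x ≠ x' → x ∩ x' = y := by
  classical
  haveI iwoκ : IsWellOrder κ.ord.ToType ((· < ·) : κ.ord.ToType → κ.ord.ToType → Prop) :=
    isWellOrder_lt
  have hθ0 : ℵ₀ ≤ θ := hθ.aleph0_le
  have hmkθ : #θ.ord.ToType = θ := by rw [Cardinal.mk_toType, Cardinal.card_ord]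
  haveI hκne : Nonempty κ.ord.ToType := Ordinal.nonempty_toType_iff.2
    (fun h => (Cardinal.aleph0_pos.trans_le hκ).ne' (Cardinal.ord_eq_zero.1 h))
  -- index a `θ`-sized subfamily by `θ.ord.ToType`
  obtain ⟨e⟩ : Nonempty (θ.ord.ToType ↪ A) := (Cardinal.le_def _ _).1 (hmkθ.trans_le hA)
  set x : θ.ord.ToType → Set X := fun i => (e i).1 with hx
  have hxinj : Function.Injective x := fun i j h => e.injective (Subtype.ext h)
  have hxA : ∀ i, x i ∈ A := fun i => (e i).2
  have hxκ : ∀ i, #(x i) < κ := fun i => hsmall _ (hxA i)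
  set U : Set X := ⋃ i, x i with hU
  have hxU : ∀ i, x i ⊆ U := fun i => Set.subset_iUnion x i
  have hUcard : #U ≤ θ := by
    refine (mk_iUnion_le x).trans ?_
    rw [hmkθ]
    calc θ * ⨆ i, #(x i) ≤ θ * κ :=
          mul_le_mul_right (ciSup_le' fun i => (hxκ i).le) _
      _ = θ := Cardinal.mul_eq_left hθ0 hκθ.le
          (Cardinal.aleph0_pos.trans_le hκ).ne'
  obtain ⟨g⟩ : Nonempty (U ↪ θ.ord.ToType) := (Cardinal.le_def _ _).1 (hUcard.trans_eq hmkθ.symm)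
  set Y : θ.ord.ToType → Set θ.ord.ToType :=
    fun i => g '' (Subtype.val ⁻¹' (x i)) with hY
  -- image cancellation
  have hcancel : ∀ s t : Set X, s ⊆ U → t ⊆ U →
      g '' (Subtype.val ⁻¹' s) = g '' (Subtype.val ⁻¹' t) → s = t := by
    intro s t hs ht h
    have h2 : Subtype.val ⁻¹' s = Subtype.val ⁻¹' t := (Set.image_injective.2 g.injective) h
    have h3 := congrArg (fun r => Subtype.val '' r) h2
    simpa [Set.image_preimage_eq_inter_range, Subtype.range_coe,
      Set.inter_eq_self_of_subset_left hs, Set.inter_eq_self_of_subset_left ht] using h3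
  have hYinj : Function.Injective Y := fun i j h =>
    hxinj (hcancel _ _ (hxU i) (hxU j) h)
  have hYx : ∀ i j, Y i ∩ Y j = g '' (Subtype.val ⁻¹' (x i ∩ x j)) := by
    intro i j
    rw [hY]
    rw [Set.preimage_inter, Set.image_inter g.injective]
  have hYκ : ∀ i, #(Y i) < κ := by
    intro i
    refine lt_of_le_of_lt (mk_image_le.trans
      (Cardinal.mk_preimage_of_injective _ _ Subtype.val_injective)) (hxκ i)
  -- make `κ` regular: uniformize the cardinality of the `Y i`
  set q : θ.ord.ToType → κ.ord.ToType := fun i =>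
    Ordinal.enum ((· < ·) : κ.ord.ToType → κ.ord.ToType → Prop)
      ⟨(#(Y i)).ord, by rw [Set.mem_Iio, Ordinal.type_toType]; exact Cardinal.ord_lt_ord.2 (hYκ i)⟩ with hq
  have hSuniv : θ ≤ #(Set.univ : Set θ.ord.ToType) := by rw [Cardinal.mk_univ, hmkθ]
  obtain ⟨j₂, hj₂⟩ := regular_pigeon hθ Set.univ hSuniv q (by
    refine lt_of_le_of_lt (mk_le_mk_of_subset (Set.subset_univ _)) ?_
    rw [Cardinal.mk_univ, Cardinal.mk_toType, Cardinal.card_ord]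
    exact hκθ)
  set S₁ := {i ∈ Set.univ | q i = j₂} with hS₁def
  set μ := (Ordinal.typein ((· < ·) : κ.ord.ToType → κ.ord.ToType → Prop) j₂).card with hμdef
  have hμ : ∀ i ∈ S₁, #(Y i) = μ := by
    intro i hi
    have h1 := congrArg (Ordinal.typein ((· < ·) : κ.ord.ToType → κ.ord.ToType → Prop)) hi.2
    rw [hq] at h1
    erw [Ordinal.typein_enum] at h1
    rw [hμdef, ← h1, Cardinal.card_ord]
  have hS₁ne : S₁.Nonempty := by
    rw [Set.nonempty_iff_ne_empty]
    intro h
    rw [h] at hj₂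
    simp only [Cardinal.mk_emptyCollection] at hj₂
    exact absurd (hj₂.trans_lt (Cardinal.aleph0_pos.trans_le hθ0)) (lt_irrefl _).elim
  obtain ⟨i₀, hi₀⟩ := hS₁ne
  have hμκ : μ < κ := hμ i₀ hi₀ ▸ hYκ i₀
  set κ' := max (Order.succ μ) ℵ₀ with hκ'def
  have hκ'κ : κ' ≤ κ := max_le (Order.succ_le_of_lt hμκ) hκ
  have hκ'reg : κ'.IsRegular := by
    rcases le_or_gt ℵ₀ μ with h | h
    · rw [hκ'def, max_eq_left (h.trans (Order.le_succ μ))]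
      exact Cardinal.isRegular_succ h
    · rw [hκ'def, max_eq_right (Order.succ_le_of_lt h)]
      exact Cardinal.isRegular_aleph0
  have hpow' : ∀ α < θ, α ^< κ' < θ := fun α hα =>
    (Cardinal.powerlt_le_powerlt_left hκ'κ).trans_lt (hpow α hα)
  have hYsmall' : ∀ i ∈ S₁, #(Y i) < κ' := by
    intro i hi
    rw [hμ i hi]
    exact lt_of_lt_of_le (Order.lt_succ μ) (le_max_left _ _)
  obtain ⟨T, hTS₁, hTcard, c, hc⟩ := delta_core κ' θ hκ'reg hθ (hκ'κ.trans_lt hκθ) hpow'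
    Y S₁ hj₂ hYsmall' hYinj.injOn
  -- extract a subfamily of size exactly `θ`
  obtain ⟨T', hT'T, hT'card⟩ := Cardinal.le_mk_iff_exists_subset.1 hTcard
  have h2T : (2 : Cardinal) ≤ #T' := by
    rw [hT'card]
    exact le_trans (by exact_mod_cast (Cardinal.nat_lt_aleph0 2).le) hθ0
  obtain ⟨⟨a₀, ha₀⟩, ⟨b₀, hb₀⟩, hab⟩ := Cardinal.two_le_iff.1 h2T
  have hab' : a₀ ≠ b₀ := fun h => hab (Subtype.ext h)
  refine ⟨x '' T', ?_, ?_, x a₀ ∩ x b₀, ?_⟩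
  · rintro _ ⟨i, _, rfl⟩
    exact hxA i
  · rw [mk_image_eq_of_injOn _ _ hxinj.injOn, hT'card]
  · rintro _ ⟨i, hi, rfl⟩ _ ⟨j, hj, rfl⟩ hne
    have hij : i ≠ j := fun h => hne (congrArg x h)
    have h1 : Y i ∩ Y j = Y a₀ ∩ Y b₀ := by
      rw [hc i (hT'T hi) j (hT'T hj) hij, hc a₀ (hT'T ha₀) b₀ (hT'T hb₀) hab']
    rw [hYx, hYx] at h1
    exact hcancel _ _ (Set.inter_subset_left.trans (hxU i))
      (Set.inter_subset_left.trans (hxU a₀)) h1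
end

section
/- Assume CH. Let Q_θ be the forcing whose conditions are triples p = (T_p, u_p, η̄_p) where T_p is a countable tree of height some δ < ω₁ on underlying set ω·δ with β-th level [ω·β, ω·(β+1)), every node of T_p has extensions to every level below δ, u_p ∈ [θ]^{≤ω}, and η̄_p = ⟨η_{p,α} : α ∈ u_p⟩ assigns to each α ∈ u_p a branch of T_p restricted below some successor ordinal ≤ δ; ordered by end-extension of trees and extension of branches. Then the countably supported product of ω₂-many copies of Q_θ (θ ranging over a set of cardinals of size at most continuum of ω₁-sized data) has the ω₂-chain condition. -/
open Cardinal

/-- the level of the node `x` : nodes in `[ω·β, ω·(β+1))` form the `β`-th level. -/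
noncomputable def olvl (x : Ordinal.{0}) : Ordinal.{0} := x / Ordinal.omega0

/-- A condition of the forcing `Q_θ` : a triple `(T_p, u_p, η̄_p)` where `T_p` is a
countable tree of height `ht < ω₁` on the underlying set `ω·ht` whose `β`-th level is
`[ω·β, ω·(β+1))`, every node has extensions to every higher level below `ht` (normality),
`u` is a countable subset of `θ`, and `η` assigns to each `α ∈ u` a branch of the
restriction of `T_p` below some successor ordinal `≤ ht`. -/
structure QCond (θ : Cardinal.{0}) : Type 1 where
  ht : Ordinal.{0}
  ht_lt : ht < omega1
  tlt : Ordinal.{0} → Ordinal.{0} → Prop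
  tlt_dom : ∀ x y, tlt x y → x < Ordinal.omega0 * ht ∧ y < Ordinal.omega0 * ht
  tlt_trans : ∀ x y z, tlt x y → tlt y z → tlt x z
  tlt_level : ∀ x y, tlt x y → olvl x < olvl y
  tlt_pred : ∀ y, y < Ordinal.omega0 * ht → ∀ β < olvl y, ∃! x, tlt x y ∧ olvl x = β
  tlt_lin : ∀ x y z, tlt x z → tlt y z → olvl x < olvl y → tlt x y
  normal : ∀ x, x < Ordinal.omega0 * ht → ∀ β, olvl x ≤ β → β < ht →
    ∃ y, y < Ordinal.omega0 * ht ∧ olvl y = β ∧ (x = y ∨ tlt x y)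
  u : Set Ordinal.{0}
  u_sub : u ⊆ Set.Iio θ.ord
  u_count : u.Countable
  eta : Ordinal.{0} → Set Ordinal.{0}
  eta_dom : ∀ α, α ∉ u → eta α = ∅
  eta_branch : ∀ α ∈ u, ∃ γ : Ordinal.{0}, (∃ β, γ = β + 1) ∧ γ ≤ ht ∧
    (∀ β < γ, ∃! x, x ∈ eta α ∧ olvl x = β) ∧
    (∀ x ∈ eta α, x < Ordinal.omega0 * ht ∧ olvl x < γ) ∧
    (∀ x ∈ eta α, ∀ y ∈ eta α, olvl x < olvl y → tlt x y)

/-- the order of `Q_θ` : `q ≤ p` iff `T_q` end-extends `T_p` and every branch of `p`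
is extended by the corresponding branch of `q`. -/
def QCond.Le {θ : Cardinal.{0}} (q p : QCond θ) : Prop :=
  p.ht ≤ q.ht ∧
  (∀ x y, x < Ordinal.omega0 * p.ht → y < Ordinal.omega0 * p.ht →
    (q.tlt x y ↔ p.tlt x y)) ∧
  p.u ⊆ q.u ∧ ∀ α ∈ p.u, p.eta α ⊆ q.eta α

/-- A condition of the countably supported product `P_S = ∏_{θ ∈ S} Q_θ`. -/
structure PCond (S : Set Cardinal.{0}) : Type 1 where
  dom : Set Cardinal.{0}
  dom_sub : dom ⊆ S
  dom_count : dom.Countable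
  val : ∀ θ ∈ dom, QCond θ

/-- the (coordinatewise) order of the product. -/
def PCond.Le {S : Set Cardinal.{0}} (q p : PCond S) : Prop :=
  ∃ hsub : p.dom ⊆ q.dom,
    ∀ θ (h : θ ∈ p.dom), QCond.Le (q.val θ (hsub h)) (p.val θ h)

section Aux
open Set Ordinal

noncomputable def Om2 : Ordinal.{0} := (Cardinal.aleph 2).ord

lemma cof_Om2 : Om2.cof = Cardinal.aleph 2 := by
  have : Cardinal.IsRegular (Cardinal.aleph 2) := by
    have := Cardinal.isRegular_aleph_succ 1
    rwa [show Order.succ (1:Ordinal) = 2 by simp; norm_num] at this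
  exact this.cof_eq

lemma cof_om1 : omega1.cof = Cardinal.aleph 1 := Cardinal.isRegular_aleph_one.cof_eq

lemma aleph0_lt_cof_Om2 : Cardinal.aleph0 < Om2.cof := by
  rw [cof_Om2]
  calc (Cardinal.aleph0 : Cardinal.{0}) = Cardinal.aleph 0 := (Cardinal.aleph_zero).symm
  _ < Cardinal.aleph 2 := by
      apply Cardinal.aleph_lt_aleph.2; norm_num

lemma card_lt_of_lt_Om2 {x : Ordinal.{0}} (h : x < Om2) : x.card ≤ Cardinal.aleph 1 := by
  have := Cardinal.lt_ord.1 h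
  have h2 : Cardinal.aleph 2 = Order.succ (Cardinal.aleph 1) := by
    rw [show (2:Ordinal) = Order.succ 1 by simp; norm_num, Cardinal.aleph_succ]
  rw [h2, Order.lt_succ_iff] at this
  exact this

lemma card_lt_cof_Om2 {x : Ordinal.{0}} (h : x < Om2) : x.card < Om2.cof := by
  rw [cof_Om2]
  exact lt_of_le_of_lt (card_lt_of_lt_Om2 h) (by
    have : Cardinal.aleph 1 < Cardinal.aleph 2 := by apply Cardinal.aleph_lt_aleph.2; norm_num
    exact this)

lemma om1_lt_Om2 : omega1 < Om2 := by
  show (Cardinal.aleph 1).ord < (Cardinal.aleph 2).ord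
  rw [Cardinal.lt_ord, Cardinal.card_ord]
  apply Cardinal.aleph_lt_aleph.2; norm_num

lemma isLimit_Om2 : Order.IsSuccLimit Om2 := Cardinal.isSuccLimit_ord (Cardinal.aleph0_le_aleph 2)
lemma isLimit_om1 : Order.IsSuccLimit omega1 := Cardinal.isSuccLimit_ord (Cardinal.aleph0_le_aleph 1)

lemma ctble_sSup_lt {s : Set Ordinal.{0}} (hs : s.Countable) {o : Ordinal.{0}}
    (ho : Cardinal.aleph0 < o.cof) (h : ∀ x ∈ s, x < o) : sSup s < o := by
  rcases s.eq_empty_or_nonempty with rfl | hne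
  · rw [csSup_empty]
    rcases eq_zero_or_pos o with rfl | hpos
    · simp at ho
    · exact hpos
  · obtain ⟨f, rfl⟩ := hs.exists_eq_range hne
    have : sSup (Set.range f) = iSup f := rfl
    rw [this]
    exact Ordinal.iSup_lt_ord (by rwa [Cardinal.mk_nat]) (fun i => h _ (Set.mem_range_self i))

lemma le_sSup_of_ctble {s : Set Ordinal.{0}} (hs : s.Countable) {x} (hx : x ∈ s) :
    x ≤ sSup s := by
  have : Small.{0} s := hs.to_subtype.toSmall
  exact le_csSup (Ordinal.bddAbove_of_small (s := s)) hx

lemma sSup_image_lt {x o : Ordinal.{0}} {f : Ordinal.{0} → Ordinal.{0}}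
    (hcard : x.card < o.cof) (h : ∀ β < x, f β < o) : sSup (f '' Set.Iio x) < o := by
  have : f '' Set.Iio x = Set.range (fun t : x.ToType => f (((Ordinal.ToType.mk (o := x))).symm t).1) := by
    ext z
    constructor
    · rintro ⟨β, hβ, rfl⟩
      exact ⟨(Ordinal.ToType.mk (o := x)) ⟨β, hβ⟩, by simp⟩
    · rintro ⟨t, rfl⟩
      exact ⟨_, (((Ordinal.ToType.mk (o := x))).symm t).2, rfl⟩
  rw [this]
  have : sSup (Set.range (fun t : x.ToType => f (((Ordinal.ToType.mk (o := x))).symm t).1)) =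
      iSup (fun t : x.ToType => f (((Ordinal.ToType.mk (o := x))).symm t).1) := rfl
  rw [this]
  exact Ordinal.iSup_lt_ord (by rwa [Cardinal.mk_toType]) (fun t => h _ (((Ordinal.ToType.mk (o := x))).symm t).2)

lemma sSup_le_of_forall {s : Set Ordinal.{0}} {b : Ordinal} (h : ∀ x ∈ s, x ≤ b) : sSup s ≤ b := by
  rcases s.eq_empty_or_nonempty with rfl | hne
  · rw [csSup_empty]; exact zero_le (a := b)
  · exact csSup_le hne h

/-- A closure point of `g` below `Om2`, of uncountable cofinality (expressed via bounded
countable subsets). -/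
lemma exists_closure_point (g : Ordinal.{0} → Ordinal.{0}) (hg : ∀ β < Om2, g β < Om2) :
    ∃ δ : Ordinal.{0}, 0 < δ ∧ δ < Om2 ∧ (∀ β < δ, g β < δ) ∧
      (∀ s : Set Ordinal.{0}, s.Countable → (∀ x ∈ s, x < δ) → sSup s < δ) := by
  classical
  set M : Ordinal.{0} → Ordinal.{0} :=
    fun x => max (x+1) (sSup ((fun β => g β + 1) '' Set.Iio x)) with hM
  have hMlt : ∀ x < Om2, M x < Om2 := by
    intro x hx
    apply max_lt (isLimit_Om2.succ_lt hx)
    exact sSup_image_lt (card_lt_cof_Om2 hx) (fun β hβ => isLimit_Om2.succ_lt (hg β (hβ.trans hx)))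
  have hMself : ∀ x, x < M x := fun x => lt_of_lt_of_le (lt_add_one x) (le_max_left _ _)
  have hMg : ∀ x, ∀ β < x, g β < M x := by
    intro x β hβ
    have hmem : g β + 1 ∈ (fun β => g β + 1) '' Set.Iio x := ⟨β, hβ, rfl⟩
    have := le_csSup Ordinal.bddAbove_of_small hmem
    exact lt_of_lt_of_le (lt_add_one (g β)) (this.trans (le_max_right _ _))
  -- the chain
  set c : Ordinal.{0} → Ordinal.{0} :=
    @WellFounded.fix Ordinal.{0} (fun _ => Ordinal.{0}) (· < ·) Ordinal.lt_wf
      (fun ξ IH => max 1 (sSup ((fun η => if h : η < ξ then M (IH η h) else 0) '' Set.Iio ξ)))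
      with hc
  have hceq : ∀ ξ, c ξ = max 1 (sSup ((fun η => if h : η < ξ then M (c η) else 0) '' Set.Iio ξ)) := by
    intro ξ
    rw [hc]
    rw [WellFounded.fix_eq]
  have hmono : ∀ ξ, ∀ η < ξ, M (c η) ≤ c ξ := by
    intro ξ η hη
    rw [hceq ξ]
    refine le_trans ?_ (le_max_right _ _)
    refine le_csSup Ordinal.bddAbove_of_small ?_
    exact ⟨η, hη, by simp [hη]⟩
  have hstrict : ∀ ξ, ∀ η < ξ, c η < c ξ :=
    fun ξ η hη => lt_of_lt_of_le (hMself (c η)) (hmono ξ η hη)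
  have one_lt_Om2 : (1:Ordinal.{0}) < Om2 := by
    refine lt_trans ?_ om1_lt_Om2
    rw [show omega1 = (Cardinal.aleph 1).ord from rfl, Cardinal.lt_ord, Ordinal.card_one]
    exact lt_of_lt_of_le Cardinal.one_lt_aleph0 (Cardinal.aleph0_le_aleph 1)
  have hclt : ∀ ξ, ξ < omega1 → c ξ < Om2 := by
    intro ξ
    induction ξ using Ordinal.induction with
    | h ξ IH =>
      intro hξ
      rw [hceq ξ]
      apply max_lt one_lt_Om2
      apply sSup_image_lt (card_lt_cof_Om2 (hξ.trans om1_lt_Om2))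
      intro η hη
      simp only [hη, dif_pos]
      exact hMlt _ (IH η hη (hη.trans hξ))
  -- the closure point
  set δ : Ordinal.{0} := sSup (c '' Set.Iio omega1) with hδ
  have hδlt : δ < Om2 := by
    apply sSup_image_lt ?_ hclt
    rw [show omega1 = (Cardinal.aleph 1).ord from rfl, Cardinal.card_ord, cof_Om2]
    apply Cardinal.aleph_lt_aleph.2; norm_num
  have hcle : ∀ ξ < omega1, c ξ ≤ δ := by
    intro ξ hξ
    exact le_csSup Ordinal.bddAbove_of_small ⟨ξ, hξ, rfl⟩
  have hδpos : 0 < δ := by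
    refine lt_of_lt_of_le ?_ (hcle 0 isLimit_om1.pos)
    rw [hceq 0]
    exact lt_of_lt_of_le zero_lt_one (le_max_left _ _)
  have hcover : ∀ β < δ, ∃ ξ < omega1, β < c ξ := by
    intro β hβ
    by_contra hcon
    push_neg at hcon
    have : δ ≤ β := csSup_le ⟨c 0, 0, isLimit_om1.pos, rfl⟩ (by
      rintro x ⟨ξ, hξ, rfl⟩
      exact hcon ξ hξ)
    exact absurd hβ (not_lt.2 this)
  refine ⟨δ, hδpos, hδlt, ?_, ?_⟩
  · intro β hβ
    obtain ⟨ξ, hξ, hβc⟩ := hcover β hβ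
    have h1 : g β < M (c ξ) := hMg _ _ hβc
    have h2 : M (c ξ) ≤ c (ξ+1) := hmono _ _ (lt_add_one ξ)
    exact lt_of_lt_of_le h1 (h2.trans (hcle _ (isLimit_om1.succ_lt hξ)))
  · intro s hs hsδ
    classical
    have hpick : ∀ x ∈ s, ∃ ξ < omega1, x < c ξ := fun x hx => hcover x (hsδ x hx)
    set pk : Ordinal → Ordinal := fun x => if h : x ∈ s then (hpick x h).choose else 0 with hpk
    have hpks : ∀ x ∈ s, pk x < omega1 ∧ x < c (pk x) := by
      intro x hx
      rw [hpk]; simp only [hx, dif_pos]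
      exact ⟨(hpick x hx).choose_spec.1, (hpick x hx).choose_spec.2⟩
    set ζ : Ordinal := sSup (pk '' s) with hζ
    have hζlt : ζ < omega1 := by
      apply ctble_sSup_lt (hs.image _) ?_ ?_
      · rw [cof_om1]
        exact lt_of_lt_of_le (by exact Cardinal.aleph0_lt_aleph_one) le_rfl
      · rintro x ⟨x', hx', rfl⟩
        exact (hpks x' hx').1
    have hbound : ∀ x ∈ s, x < c (ζ+1) := by
      intro x hx
      refine lt_of_lt_of_le (hpks x hx).2 ?_
      rcases eq_or_lt_of_le (le_sSup_of_ctble (hs.image _) (Set.mem_image_of_mem _ hx) : pk x ≤ ζ) with heq | hlt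
      · rw [heq]; exact (hstrict _ _ (lt_add_one ζ)).le
      · exact ((hstrict _ _ (hlt.trans (lt_add_one ζ)))).le
    refine lt_of_le_of_lt (sSup_le_of_forall (fun x hx => (hbound x hx).le)) ?_
    refine lt_of_lt_of_le (hstrict _ _ (lt_add_one (ζ+1))) (hcle _ ?_)
    exact isLimit_om1.succ_lt (isLimit_om1.succ_lt hζlt)

lemma mk_Iio_Om2 : #↥(Set.Iio Om2) = Cardinal.aleph.{1} 2 := by
  rw [Ordinal.mk_Iio_ordinal, show Om2 = (Cardinal.aleph 2).ord from rfl, Cardinal.card_ord,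
    Cardinal.lift_aleph]
  norm_num

lemma mk_Iio_om1 : #↥(Set.Iio omega1) = Cardinal.aleph.{1} 1 := by
  rw [Ordinal.mk_Iio_ordinal, show omega1 = (Cardinal.aleph 1).ord from rfl, Cardinal.card_ord,
    Cardinal.lift_aleph]
  norm_num

lemma sSup_lt_Om2_of_mk_le {s : Set Ordinal.{0}} (h : #↥s ≤ Cardinal.aleph.{1} 1)
    (hs : ∀ x ∈ s, x < Om2) : sSup s < Om2 := by
  rcases s.eq_empty_or_nonempty with rfl | hne
  · rw [csSup_empty]; exact isLimit_Om2.pos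
  · rw [← mk_Iio_om1] at h
    obtain ⟨e⟩ := (Cardinal.le_def _ _).1 h
    have : Nonempty ↥s := hne.to_subtype
    set q : omega1.ToType → Ordinal.{0} :=
      fun t => (Function.invFun e ⟨((Ordinal.ToType.mk (o := omega1))).symm t, (((Ordinal.ToType.mk (o := omega1))).symm t).2⟩ : ↥s).1 with hq
    have hcov : ∀ x ∈ s, ∃ t, x ≤ q t := by
      intro x hx
      refine ⟨(Ordinal.ToType.mk (o := omega1)) ⟨(e ⟨x, hx⟩).1, (e ⟨x, hx⟩).2⟩, ?_⟩
      rw [hq]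
      simp only [OrderIso.symm_apply_apply]
      have : Function.invFun e ⟨(e ⟨x,hx⟩).1, (e ⟨x,hx⟩).2⟩ = ⟨x, hx⟩ := by
        have := Function.leftInverse_invFun e.injective ⟨x, hx⟩
        convert this using 2
      rw [this]
    have hq_mem : ∀ t, q t ∈ s := fun t => (Function.invFun e _ : ↥s).2
    have h1 : sSup s ≤ iSup q := by
      apply csSup_le hne
      intro x hx
      obtain ⟨t, ht⟩ := hcov x hx
      exact ht.trans (Ordinal.le_iSup q t)
    refine lt_of_le_of_lt h1 (Ordinal.iSup_lt_ord ?_ (fun t => hs _ (hq_mem t)))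
    rw [Cardinal.mk_toType, show omega1 = (Cardinal.aleph 1).ord from rfl, Cardinal.card_ord,
      cof_Om2]
    apply Cardinal.aleph_lt_aleph.2; norm_num


lemma aleph1_lt_aleph2 : (Cardinal.aleph.{1} 1) < Cardinal.aleph.{1} 2 := by
  apply Cardinal.aleph_lt_aleph.2; norm_num

lemma lt_aleph2_iff_le_aleph1 {c : Cardinal.{1}} :
    c < Cardinal.aleph 2 ↔ c ≤ Cardinal.aleph 1 := by
  rw [show (2:Ordinal) = Order.succ 1 by simp; norm_num, Cardinal.aleph_succ, Order.lt_succ_iff]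

lemma exists_big_fiber {X W : Type 1} (f : X → W)
    (hX : Cardinal.aleph.{1} 2 ≤ #X) (hW : #W ≤ Cardinal.aleph.{1} 1) :
    ∃ w : W, Cardinal.aleph.{1} 2 ≤ #{x : X // f x = w} := by
  by_contra hcon
  push_neg at hcon
  have hfib : ∀ w, #{x : X // f x = w} ≤ Cardinal.aleph.{1} 1 :=
    fun w => lt_aleph2_iff_le_aleph1.1 (hcon w)
  have h1 : #X = Cardinal.sum (fun w : W => #{x : X // f x = w}) := by
    rw [← Cardinal.mk_sigma]
    exact Cardinal.mk_congr (Equiv.sigmaFiberEquiv f).symm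
  have h2 : Cardinal.sum (fun w : W => #{x : X // f x = w}) ≤
      Cardinal.sum (fun _ : W => Cardinal.aleph.{1} 1) := Cardinal.sum_le_sum _ _ hfib
  rw [Cardinal.sum_const'] at h2
  have h3 : #W * Cardinal.aleph.{1} 1 ≤ Cardinal.aleph.{1} 1 * Cardinal.aleph.{1} 1 :=
    mul_le_mul_left hW _
  rw [Cardinal.mul_eq_self (Cardinal.aleph0_le_aleph 1)] at h3
  have := hX.trans (h1.le.trans (h2.trans h3))
  exact absurd this (not_le.2 aleph1_lt_aleph2)

lemma mk_ctble_bdd_le {α : Type 1} (G : Set α) (hG : #↥G ≤ Cardinal.aleph.{1} 1)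
    (hCH1 : (2:Cardinal.{1}) ^ (Cardinal.aleph0 : Cardinal.{1}) = Cardinal.aleph 1) :
    #{t : Set α // t ⊆ G ∧ #↥t ≤ Cardinal.aleph0} ≤ Cardinal.aleph.{1} 1 := by
  refine le_trans (Cardinal.mk_bounded_subset_le G Cardinal.aleph0) ?_
  have hmax : max (#↥G) Cardinal.aleph0 ≤ Cardinal.aleph 1 :=
    max_le hG (Cardinal.aleph0_le_aleph 1)
  calc max (#↥G) Cardinal.aleph0 ^ (Cardinal.aleph0 : Cardinal.{1})
      ≤ (Cardinal.aleph 1) ^ (Cardinal.aleph0 : Cardinal.{1}) :=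
        Cardinal.power_le_power_right hmax
    _ = Cardinal.aleph 1 := by
        rw [← hCH1, ← Cardinal.power_mul, Cardinal.aleph0_mul_aleph0]

lemma deltaSystem (hCH1 : (2:Cardinal.{1}) ^ (Cardinal.aleph0 : Cardinal.{1}) = Cardinal.aleph 1)
    (y : Ordinal.{0} → Set Ordinal.{0}) (hc : ∀ α, (y α).Countable)
    (hsub : ∀ α, y α ⊆ Set.Iio Om2) :
    ∃ (R : Set Ordinal.{0}) (T : Set Ordinal.{0}), T ⊆ Set.Iio Om2 ∧ R.Countable ∧
      Cardinal.aleph.{1} 2 ≤ #↥T ∧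
      (∀ μ ∈ T, ∀ ν ∈ T, μ ≠ ν → y μ ∩ y ν = R) := by
  classical
  set f : Ordinal.{0} → Ordinal.{0} := fun α => sSup (y α ∩ Set.Iio α) with hf
  set Bddc : Ordinal.{0} → Prop :=
    fun δ => ∀ s : Set Ordinal.{0}, s.Countable → (∀ x ∈ s, x < δ) → sSup s < δ with hBddc
  set F : Ordinal.{0} → Set Ordinal.{0} := fun β => {α | α < Om2 ∧ Bddc α ∧ f α ≤ β} with hF
  -- Step 1: some head-bound has ℵ₂ many indices
  have step1 : ∃ β, β < Om2 ∧ Cardinal.aleph.{1} 2 ≤ #↥(F β) := by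
    by_contra hcon
    push_neg at hcon
    have hsmall : ∀ β, β < Om2 → #↥(F β) ≤ Cardinal.aleph.{1} 1 :=
      fun β hβ => lt_aleph2_iff_le_aleph1.1 (hcon β hβ)
    set g : Ordinal.{0} → Ordinal.{0} :=
      fun β => if h : β < Om2 then sSup (F β) else 0 with hg
    have hgOm2 : ∀ β < Om2, g β < Om2 := by
      intro β hβ
      rw [hg]; simp only [hβ, dif_pos]
      exact sSup_lt_Om2_of_mk_le (hsmall β hβ) (fun α hα => hα.1)
    obtain ⟨δ, hδpos, hδOm2, hδcl, hδbdd⟩ := exists_closure_point g hgOm2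
    have hfδ : f δ < δ := by
      rw [hf]
      exact hδbdd _ ((hc δ).mono Set.inter_subset_left) (fun x hx => hx.2)
    have hδF : δ ∈ F (f δ) := ⟨hδOm2, hδbdd, le_rfl⟩
    have h1 : δ ≤ g (f δ) := by
      rw [hg]; simp only [hfδ.trans hδOm2, dif_pos]
      have : Small.{0} ↥(F (f δ)) := @small_subset _ (Set.Iio Om2) _ (fun α hα => hα.1) (Ordinal.small_Iio _)
      exact le_csSup Ordinal.bddAbove_of_small hδF
    exact absurd (lt_of_le_of_lt h1 (hδcl _ hfδ)) (lt_irrefl δ)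
  obtain ⟨β, hβOm2, hβbig⟩ := step1
  -- Step 2: pigeonhole on the heads
  set W0 : Type 1 := {t : Set Ordinal.{0} // t ⊆ Set.Iic β ∧ #↥t ≤ Cardinal.aleph0} with hW0
  have hW0card : #W0 ≤ Cardinal.aleph.{1} 1 := by
    apply mk_ctble_bdd_le _ ?_ hCH1
    have h1 : Set.Iic β ⊆ Set.Iio (β+1) := fun x hx => lt_of_le_of_lt hx (lt_add_one β)
    refine le_trans (Cardinal.mk_le_mk_of_subset h1) ?_
    rw [Ordinal.mk_Iio_ordinal]
    refine le_trans (Cardinal.lift_le.2 (card_lt_of_lt_Om2 (isLimit_Om2.succ_lt hβOm2))) ?_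
    rw [Cardinal.lift_aleph]
    norm_num
  have hhead_mem : ∀ α : ↥(F β), y α.1 ∩ Set.Iio α.1 ⊆ Set.Iic β := by
    intro α x hx
    have hxle : x ≤ f α.1 := le_sSup_of_ctble ((hc _).mono Set.inter_subset_left) hx
    exact hxle.trans α.2.2.2
  set head : ↥(F β) → W0 := fun α => ⟨y α.1 ∩ Set.Iio α.1, hhead_mem α, by
    have : Countable ↥(y α.1 ∩ Set.Iio α.1) := ((hc _).mono Set.inter_subset_left).to_subtype
    exact Cardinal.mk_le_aleph0⟩ with hhead
  obtain ⟨R0, hR0⟩ := exists_big_fiber head hβbig hW0card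
  set Sgood : Set Ordinal.{0} := {α | α ∈ F β ∧ y α ∩ Set.Iio α = R0.1} with hSgood
  have hSbig : Cardinal.aleph.{1} 2 ≤ #↥Sgood := by
    refine le_trans hR0 ?_
    refine ⟨⟨fun x => ⟨x.1.1, x.1.2, congrArg Subtype.val x.2⟩, ?_⟩⟩
    rintro ⟨⟨a, ha⟩, ha2⟩ ⟨⟨b, hb⟩, hb2⟩ h
    simp only [Subtype.mk.injEq] at h
    apply Subtype.ext; apply Subtype.ext; exact h
  have hSIio : Sgood ⊆ Set.Iio Om2 := fun α hα => hα.1.1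
  -- Step 3: unboundedness of Sgood
  have hSunb : ∀ ζ, ζ < Om2 → ∃ α, α ∈ Sgood ∧ ζ < α := by
    intro ζ hζ
    by_contra hcon
    push_neg at hcon
    have hsub2 : Sgood ⊆ Set.Iio (ζ+1) := fun α hα => lt_of_le_of_lt (hcon α hα) (lt_add_one ζ)
    have : #↥Sgood ≤ Cardinal.aleph.{1} 1 := by
      refine le_trans (Cardinal.mk_le_mk_of_subset hsub2) ?_
      rw [Ordinal.mk_Iio_ordinal]
      refine le_trans (Cardinal.lift_le.2 (card_lt_of_lt_Om2 (isLimit_Om2.succ_lt hζ))) ?_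
      rw [Cardinal.lift_aleph]; norm_num
    exact absurd (hSbig.trans this) (not_le.2 aleph1_lt_aleph2)
  -- Step 4: spacing recursion
  set step : Ordinal.{0} → Ordinal.{0} := fun v => max v (sSup (y v)) with hstep
  set pick : Ordinal.{0} → Ordinal.{0} :=
    fun b => if h : ∃ α, α ∈ Sgood ∧ b < α then h.choose else 0 with hpick
  set νf : Ordinal.{0} → Ordinal.{0} :=
    @WellFounded.fix Ordinal.{0} (fun _ => Ordinal.{0}) (· < ·) Ordinal.lt_wf
      (fun ξ IH => pick (sSup ((fun η => if h : η < ξ then step (IH η h) else 0) '' Set.Iio ξ)))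
      with hνf
  set B : Ordinal.{0} → Ordinal.{0} :=
    fun ξ => sSup ((fun η => if h : η < ξ then step (νf η) else 0) '' Set.Iio ξ) with hB
  have hνeq : ∀ ξ, νf ξ = pick (B ξ) := by
    intro ξ
    rw [hνf, WellFounded.fix_eq]
  have hmain : ∀ ξ, ξ < Om2 → νf ξ ∈ Sgood ∧ B ξ < νf ξ := by
    intro ξ
    induction ξ using Ordinal.induction with
    | h ξ IH =>
      intro hξ
      have hBlt : B ξ < Om2 := by
        rw [hB]
        apply sSup_image_lt (card_lt_cof_Om2 hξ)
        intro η hη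
        simp only [hη, dif_pos]
        have hη2 := (IH η hη (hη.trans hξ)).1
        apply max_lt (hSIio hη2)
        exact ctble_sSup_lt (hc _) aleph0_lt_cof_Om2 (fun x hx => hsub _ hx)
      have hex : ∃ α, α ∈ Sgood ∧ B ξ < α := hSunb _ hBlt
      have : νf ξ = hex.choose := by rw [hνeq ξ, hpick]; simp only [hex, dif_pos]
      rw [this]
      exact ⟨hex.choose_spec.1, hex.choose_spec.2⟩
  have hspace : ∀ η ξ, η < ξ → ξ < Om2 → νf η < νf ξ ∧ ∀ x ∈ y (νf η), x < νf ξ := by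
    intro η ξ hηξ hξ
    have hstepB : step (νf η) ≤ B ξ := by
      rw [hB]
      refine le_csSup Ordinal.bddAbove_of_small ⟨η, hηξ, by simp [hηξ]⟩
    have hBν := (hmain ξ hξ).2
    constructor
    · exact lt_of_le_of_lt ((le_max_left _ _).trans hstepB) hBν
    · intro x hx
      have : x ≤ sSup (y (νf η)) := le_sSup_of_ctble (hc _) hx
      exact lt_of_le_of_lt (this.trans ((le_max_right _ _).trans hstepB)) hBν
  -- Step 5: conclusion
  refine ⟨R0.1, νf '' Set.Iio Om2, ?_, ?_, ?_, ?_⟩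
  · rintro x ⟨ξ, hξ, rfl⟩
    exact hSIio (hmain ξ hξ).1
  · have h0 : νf 0 ∈ Sgood := (hmain 0 isLimit_Om2.pos).1
    rw [← h0.2]
    exact (hc _).mono Set.inter_subset_left
  · rw [Cardinal.mk_image_eq_of_injOn]
    · rw [mk_Iio_Om2]
    · intro a ha b hb hab
      rcases lt_trichotomy a b with h | h | h
      · exact absurd hab (ne_of_lt (hspace a b h hb).1)
      · exact h
      · exact absurd hab.symm (ne_of_lt (hspace b a h ha).1)
  · have key : ∀ η ξ, η < ξ → ξ < Om2 → y (νf η) ∩ y (νf ξ) = R0.1 := by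
      intro η ξ hηξ hξ
      have hSξ := (hmain ξ hξ).1
      apply Set.eq_of_subset_of_subset
      · rintro x ⟨hx1, hx2⟩
        rw [← hSξ.2]
        exact ⟨hx2, (hspace η ξ hηξ hξ).2 x hx1⟩
      · intro x hx
        have hSη := (hmain η (hηξ.trans hξ)).1
        constructor
        · rw [← hSη.2] at hx; exact hx.1
        · rw [← hSξ.2] at hx; exact hx.1
    rintro μ ⟨η, hη, rfl⟩ ν ⟨ξ, hξ, rfl⟩ hne
    rcases lt_trichotomy η ξ with h | h | h
    · exact key η ξ h hξ
    · exact absurd (congrArg νf h) hne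
    · rw [Set.inter_comm]; exact key ξ η h hη

end Aux

-- auxiliary: reflexivity and merging
lemma QCond.le_refl {θ : Cardinal.{0}} (P : QCond θ) : QCond.Le P P :=
  ⟨le_rfl, fun _ _ _ _ => Iff.rfl, subset_rfl, fun _ _ => subset_rfl⟩

noncomputable def QCond.merge {θ : Cardinal.{0}} (P Q : QCond θ) (hht : P.ht = Q.ht)
    (htlt : ∀ x y, P.tlt x y ↔ Q.tlt x y)
    (heta : ∀ α, α ∈ P.u → α ∈ Q.u → P.eta α = Q.eta α) : QCond θ where
  ht := P.ht
  ht_lt := P.ht_lt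
  tlt := P.tlt
  tlt_dom := P.tlt_dom
  tlt_trans := P.tlt_trans
  tlt_level := P.tlt_level
  tlt_pred := P.tlt_pred
  tlt_lin := P.tlt_lin
  normal := P.normal
  u := P.u ∪ Q.u
  u_sub := Set.union_subset P.u_sub Q.u_sub
  u_count := P.u_count.union Q.u_count
  eta := fun α => P.eta α ∪ Q.eta α
  eta_dom := by
    intro α hα
    show P.eta α ∪ Q.eta α = ∅
    rw [P.eta_dom α (fun h => hα (Or.inl h)), Q.eta_dom α (fun h => hα (Or.inr h))]
    simp
  eta_branch := by
    intro α hα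
    show ∃ γ : Ordinal.{0}, (∃ β, γ = β + 1) ∧ γ ≤ P.ht ∧
      (∀ β < γ, ∃! x, x ∈ P.eta α ∪ Q.eta α ∧ olvl x = β) ∧
      (∀ x ∈ P.eta α ∪ Q.eta α, x < Ordinal.omega0 * P.ht ∧ olvl x < γ) ∧
      (∀ x ∈ P.eta α ∪ Q.eta α, ∀ y ∈ P.eta α ∪ Q.eta α, olvl x < olvl y → P.tlt x y)
    by_cases hP : α ∈ P.u
    · have hQP : Q.eta α ⊆ P.eta α := by
        by_cases hQ : α ∈ Q.u
        · rw [heta α hP hQ]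
        · rw [Q.eta_dom α hQ]; exact Set.empty_subset _
      rw [Set.union_eq_self_of_subset_right hQP]
      exact P.eta_branch α hP
    · have hQ : α ∈ Q.u := hα.resolve_left hP
      rw [P.eta_dom α hP, Set.empty_union]
      obtain ⟨γ, h1, h2, h3, h4, h5⟩ := Q.eta_branch α hQ
      refine ⟨γ, h1, by rw [hht]; exact h2, h3, ?_, ?_⟩
      · intro x hx
        exact ⟨by rw [hht]; exact (h4 x hx).1, (h4 x hx).2⟩
      · intro x hx y hy hxy
        exact (htlt x y).2 (h5 x hx y hy hxy)

lemma QCond.merge_le_left {θ : Cardinal.{0}} (P Q : QCond θ) (hht : P.ht = Q.ht)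
    (htlt : ∀ x y, P.tlt x y ↔ Q.tlt x y)
    (heta : ∀ α, α ∈ P.u → α ∈ Q.u → P.eta α = Q.eta α) :
    QCond.Le (P.merge Q hht htlt heta) P :=
  ⟨le_rfl, fun _ _ _ _ => Iff.rfl, Set.subset_union_left, fun _ _ => Set.subset_union_left⟩

lemma QCond.merge_le_right {θ : Cardinal.{0}} (P Q : QCond θ) (hht : P.ht = Q.ht)
    (htlt : ∀ x y, P.tlt x y ↔ Q.tlt x y)
    (heta : ∀ α, α ∈ P.u → α ∈ Q.u → P.eta α = Q.eta α) :
    QCond.Le (P.merge Q hht htlt heta) Q :=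
  ⟨le_of_eq hht.symm, fun x y _ _ => htlt x y, Set.subset_union_right,
    fun _ _ => Set.subset_union_right⟩

lemma lt_aleph1_iff_le_aleph0 {c : Cardinal.{0}} :
    c < Cardinal.aleph 1 ↔ c ≤ Cardinal.aleph0 := by
  rw [show (1:Ordinal) = Order.succ 0 by simp, Cardinal.aleph_succ, Order.lt_succ_iff,
    Cardinal.aleph_zero]

lemma omul_lt_om1 {h : Ordinal.{0}} (hh : h < omega1) :
    Ordinal.omega0 * h < omega1 := by
  rw [show omega1 = (Cardinal.aleph 1).ord from rfl, Cardinal.lt_ord] at hh ⊢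
  rw [Ordinal.card_mul, Ordinal.card_omega0]
  rw [lt_aleph1_iff_le_aleph0] at hh
  rw [lt_aleph1_iff_le_aleph0]
  calc Cardinal.aleph0 * h.card ≤ Cardinal.aleph0 * Cardinal.aleph0 :=
        mul_le_mul_right hh _
  _ = Cardinal.aleph0 := Cardinal.aleph0_mul_aleph0

lemma ctble_Iio_of_lt_om1 {o : Ordinal.{0}} (ho : o < omega1) : (Set.Iio o).Countable := by
  rw [← Set.countable_coe_iff, ← Cardinal.mk_le_aleph0_iff]
  rw [Ordinal.mk_Iio_ordinal]
  rw [show omega1 = (Cardinal.aleph 1).ord from rfl, Cardinal.lt_ord,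
    lt_aleph1_iff_le_aleph0] at ho
  calc Cardinal.lift.{1} o.card ≤ Cardinal.lift.{1} Cardinal.aleph0 := Cardinal.lift_le.2 ho
  _ = Cardinal.aleph0 := Cardinal.lift_aleph0

lemma QCond.eta_ctble {θ : Cardinal.{0}} (Q : QCond θ) (α : Ordinal.{0}) :
    (Q.eta α).Countable := by
  by_cases hα : α ∈ Q.u
  · obtain ⟨γ, _, _, _, h4, _⟩ := Q.eta_branch α hα
    refine (ctble_Iio_of_lt_om1 (omul_lt_om1 Q.ht_lt)).mono ?_
    exact fun x hx => (h4 x hx).1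
  · rw [Q.eta_dom α hα]; exact Set.countable_empty

/-- the coding of the restriction of a condition to a coordinate. -/
def code {S : Set Cardinal.{0}} (P : PCond S) :
    (Cardinal.{0} ⊕ Cardinal.{0} × Ordinal.{0}) →
    (Ordinal.{0} ⊕ Ordinal.{0} × Ordinal.{0}) → Prop
  | Sum.inl θ, c => ∃ h : θ ∈ P.dom, (c = Sum.inl (P.val θ h).ht ∨
      ∃ x y : Ordinal.{0}, c = Sum.inr (x, y) ∧ (P.val θ h).tlt x y)
  | Sum.inr za, c => ∃ h : za.1 ∈ P.dom, ∃ x : Ordinal.{0},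
      c = Sum.inl x ∧ x ∈ (P.val za.1 h).eta za.2

lemma code_countable {S : Set Cardinal.{0}} (P : PCond S)
    (w : Cardinal.{0} ⊕ Cardinal.{0} × Ordinal.{0}) : {c | code P w c}.Countable := by
  classical
  match w with
  | Sum.inl θ =>
    by_cases h : θ ∈ P.dom
    · have hsub : {c | code P (Sum.inl θ) c} ⊆
          insert (Sum.inl (P.val θ h).ht)
            (Sum.inr '' (Set.Iio (Ordinal.omega0 * (P.val θ h).ht) ×ˢ
              Set.Iio (Ordinal.omega0 * (P.val θ h).ht))) := by
        rintro c ⟨h', hc | ⟨x, y, rfl, hxy⟩⟩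
        · exact Or.inl hc
        · exact Or.inr ⟨(x, y), ⟨((P.val θ h).tlt_dom x y hxy).1,
            ((P.val θ h).tlt_dom x y hxy).2⟩, rfl⟩
      refine Set.Countable.mono hsub ?_
      refine Set.Countable.insert _ (Set.Countable.image ?_ _)
      exact (ctble_Iio_of_lt_om1 (omul_lt_om1 (P.val θ h).ht_lt)).prod
        (ctble_Iio_of_lt_om1 (omul_lt_om1 (P.val θ h).ht_lt))
    · have : {c | code P (Sum.inl θ) c} = ∅ := by
        ext c; simp only [Set.mem_setOf_eq, Set.mem_empty_iff_false, iff_false]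
        rintro ⟨h', _⟩; exact h h'
      rw [this]; exact Set.countable_empty
  | Sum.inr za =>
    by_cases h : za.1 ∈ P.dom
    · have hsub : {c | code P (Sum.inr za) c} ⊆ Sum.inl '' ((P.val za.1 h).eta za.2) := by
        rintro c ⟨h', x, rfl, hx⟩
        exact ⟨x, hx, rfl⟩
      exact Set.Countable.mono hsub (Set.Countable.image ((P.val za.1 h).eta_ctble za.2) _)
    · have : {c | code P (Sum.inr za) c} = ∅ := by
        ext c; simp only [Set.mem_setOf_eq, Set.mem_empty_iff_false, iff_false]
        rintro ⟨h', _⟩; exact h h'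
      rw [this]; exact Set.countable_empty

/-- bounding set for codes -/
def C0 : Set (Ordinal.{0} ⊕ Ordinal.{0} × Ordinal.{0}) :=
  Sum.inl '' Set.Iio omega1 ∪ Sum.inr '' (Set.Iio omega1 ×ˢ Set.Iio omega1)

lemma code_bounded {S : Set Cardinal.{0}} (P : PCond S)
    (w : Cardinal.{0} ⊕ Cardinal.{0} × Ordinal.{0}) {c} (hc : code P w c) : c ∈ C0 := by
  match w with
  | Sum.inl θ =>
    obtain ⟨h, hc | ⟨x, y, rfl, hxy⟩⟩ := hc
    · exact Or.inl ⟨(P.val θ h).ht, (P.val θ h).ht_lt, hc.symm⟩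
    · refine Or.inr ⟨(x, y), ⟨?_, ?_⟩, rfl⟩
      · exact lt_trans ((P.val θ h).tlt_dom x y hxy).1 (omul_lt_om1 (P.val θ h).ht_lt)
      · exact lt_trans ((P.val θ h).tlt_dom x y hxy).2 (omul_lt_om1 (P.val θ h).ht_lt)
  | Sum.inr za =>
    obtain ⟨h, x, rfl, hx⟩ := hc
    refine Or.inl ⟨x, ?_, rfl⟩
    by_cases hu : za.2 ∈ (P.val za.1 h).u
    · obtain ⟨γ, _, _, _, h4, _⟩ := (P.val za.1 h).eta_branch za.2 hu
      exact lt_trans (h4 x hx).1 (omul_lt_om1 (P.val za.1 h).ht_lt)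
    · rw [(P.val za.1 h).eta_dom za.2 hu] at hx
      exact absurd hx (Set.notMem_empty x)

/-- the combined support-set of a product condition. -/
def bset {S : Set Cardinal.{0}} (P : PCond S) : Set (Cardinal.{0} ⊕ Cardinal.{0} × Ordinal.{0}) :=
  Sum.inl '' P.dom ∪ Sum.inr '' (⋃ (θ : ↥P.dom), ({θ.1} ×ˢ (P.val θ.1 θ.2).u))

lemma bset_ctble {S : Set Cardinal.{0}} (P : PCond S) : (bset P).Countable := by
  apply Set.Countable.union (P.dom_count.image _)
  apply Set.Countable.image
  have : Countable ↥P.dom := P.dom_count.to_subtype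
  exact Set.countable_iUnion (fun θ => (Set.countable_singleton _).prod (P.val θ.1 θ.2).u_count)

lemma mem_bset_inl {S : Set Cardinal.{0}} (P : PCond S) {θ} (h : θ ∈ P.dom) :
    Sum.inl θ ∈ bset P := Or.inl ⟨θ, h, rfl⟩

lemma mem_bset_inr {S : Set Cardinal.{0}} (P : PCond S) {θ} (h : θ ∈ P.dom) {α}
    (hα : α ∈ (P.val θ h).u) : Sum.inr (θ, α) ∈ bset P :=
  Or.inr ⟨(θ, α), Set.mem_iUnion.2 ⟨⟨θ, h⟩, ⟨rfl, hα⟩⟩, rfl⟩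



/-- assume CH.  The countably supported product of the forcings `Q_θ`
(`θ` ranging over a set `S` of cardinals) has the ω₂-chain condition: every antichain
has size `< ω₂`. -/
theorem statement3 (hCH : (2 : Cardinal.{0}) ^ Cardinal.aleph0 = Cardinal.aleph 1)
    (S : Set Cardinal.{0}) (A : Set (PCond S))
    (hanti : ∀ p ∈ A, ∀ q ∈ A, p ≠ q → ¬ ∃ r : PCond S, PCond.Le r p ∧ PCond.Le r q) :
    Cardinal.mk A < (Cardinal.aleph 2 : Cardinal.{1}) := by
  classical
  by_contra hbig
  push_neg at hbig
  -- lift CH to universe 1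
  have hCH1 : (2:Cardinal.{1}) ^ (Cardinal.aleph0 : Cardinal.{1}) = Cardinal.aleph 1 := by
    have := congrArg (Cardinal.lift.{1}) hCH
    rwa [Cardinal.lift_power, Cardinal.lift_aleph0, Cardinal.lift_two, Cardinal.lift_aleph,
      Ordinal.lift_one] at this
  -- enumerate ℵ₂ many elements of the antichain
  obtain ⟨e⟩ : Nonempty (↥(Set.Iio Om2) ↪ ↥A) := by
    rw [← Cardinal.le_def, mk_Iio_Om2]
    exact hbig
  set junk : PCond S :=
    ⟨∅, Set.empty_subset _, Set.countable_empty, fun θ h => absurd h (Set.notMem_empty θ)⟩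
    with hjunk
  set pf : Ordinal.{0} → PCond S := fun α => if h : α < Om2 then (e ⟨α, h⟩).1 else junk with hpf
  have pfA : ∀ α, α < Om2 → pf α ∈ A := by
    intro α h
    rw [hpf]; simp only [h, dif_pos]
    exact (e ⟨α, h⟩).2
  have pfInj : ∀ α, α < Om2 → ∀ α', α' < Om2 → pf α = pf α' → α = α' := by
    intro α h α' h' heq
    rw [hpf] at heq; simp only [h, h', dif_pos] at heq
    have := e.injective (Subtype.ext heq)
    exact congrArg Subtype.val this
  -- embed everything into the ordinals below Om2
  set U : Set (Cardinal.{0} ⊕ Cardinal.{0} × Ordinal.{0}) :=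
    ⋃ (t : ↥(Set.Iio Om2)), bset (pf t.1) with hUdef
  have hU : #↥U ≤ Cardinal.aleph.{1} 2 := by
    refine le_trans (Cardinal.mk_iUnion_le _) ?_
    have h1 : #↥(Set.Iio Om2) = Cardinal.aleph.{1} 2 := mk_Iio_Om2
    have h2 : ⨆ (t : ↥(Set.Iio Om2)), #↥(bset (pf t.1)) ≤ Cardinal.aleph0 := by
      have : Nonempty ↥(Set.Iio Om2) := ⟨⟨0, isLimit_Om2.pos⟩⟩
      refine ciSup_le' (fun t => ?_)
      have : Countable ↥(bset (pf t.1)) := (bset_ctble _).to_subtype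
      exact Cardinal.mk_le_aleph0
    rw [h1]
    calc Cardinal.aleph.{1} 2 * ⨆ (t : ↥(Set.Iio Om2)), #↥(bset (pf t.1))
        ≤ Cardinal.aleph.{1} 2 * Cardinal.aleph0 := mul_le_mul_right h2 _
      _ ≤ Cardinal.aleph.{1} 2 * Cardinal.aleph.{1} 2 :=
          mul_le_mul_right ((Cardinal.aleph0_le_aleph 2)) _
      _ = Cardinal.aleph.{1} 2 := Cardinal.mul_eq_self (Cardinal.aleph0_le_aleph 2)
  obtain ⟨k⟩ : Nonempty (↥U ↪ ↥(Set.Iio Om2)) := by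
    rw [← Cardinal.le_def, mk_Iio_Om2]
    exact hU
  set jj : (Cardinal.{0} ⊕ Cardinal.{0} × Ordinal.{0}) → Ordinal.{0} :=
    fun w => if h : w ∈ U then (k ⟨w, h⟩).1 else 0 with hjj
  have jjInj : ∀ w ∈ U, ∀ w' ∈ U, jj w = jj w' → w = w' := by
    intro w hw w' hw' heq
    rw [hjj] at heq; simp only [hw, hw', dif_pos] at heq
    have := k.injective (Subtype.ext heq)
    exact congrArg Subtype.val this
  have jjU : ∀ w ∈ U, jj w < Om2 := by
    intro w hw
    rw [hjj]; simp only [hw, dif_pos]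
    exact (k ⟨w, hw⟩).2
  have hbU : ∀ α, α < Om2 → bset (pf α) ⊆ U := by
    intro α h w hw
    exact Set.mem_iUnion.2 ⟨⟨α, h⟩, hw⟩
  set yy : Ordinal.{0} → Set Ordinal.{0} := fun α => jj '' bset (pf α) with hyy
  have hyc : ∀ α, (yy α).Countable := fun α => (bset_ctble _).image _
  have hysub : ∀ α, yy α ⊆ Set.Iio Om2 := by
    intro α x hx
    obtain ⟨w, hw, rfl⟩ := hx
    by_cases h : α < Om2
    · exact jjU w (hbU α h hw)
    · exfalso
      rw [hpf] at hw; simp only [h, dif_neg, not_false_iff] at hw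
      rcases hw with ⟨θ, hθ, _⟩ | ⟨za, hza, _⟩
      · exact absurd hθ (Set.notMem_empty θ)
      · rw [Set.mem_iUnion] at hza
        obtain ⟨⟨θ, hθ⟩, _⟩ := hza
        exact absurd hθ (Set.notMem_empty θ)
  -- apply the Δ-system lemma
  obtain ⟨R, T, hTsub, hRc, hTbig, hpair⟩ := deltaSystem hCH1 yy hyc hysub
  -- the root, pulled back
  set Rb : Set (Cardinal.{0} ⊕ Cardinal.{0} × Ordinal.{0}) := {w | w ∈ U ∧ jj w ∈ R} with hRb
  have hRbc : Rb.Countable := by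
    rw [← Set.countable_coe_iff]
    have : Countable ↥R := hRc.to_subtype
    refine Function.Injective.countable (f := fun w : ↥Rb => (⟨jj w.1, w.2.2⟩ : ↥R)) ?_
    rintro ⟨w, hw⟩ ⟨w', hw'⟩ h
    simp only [Subtype.mk.injEq] at h
    exact Subtype.ext (jjInj w hw.1 w' hw'.1 h)
  -- the trace of a condition on the root
  set D : Type 1 := ↥Rb × (Ordinal.{0} ⊕ Ordinal.{0} × Ordinal.{0}) with hD
  set G : Set D := Set.univ ×ˢ C0 with hG
  have hGcard : #↥G ≤ Cardinal.aleph.{1} 1 := by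
    have h1 : #↥G = #(↥(Set.univ : Set ↥Rb) × ↥C0) := Cardinal.mk_congr (Equiv.Set.prod _ _)
    rw [h1, Cardinal.mk_prod]
    simp only [Cardinal.lift_id, Cardinal.mk_univ]
    have h2 : #↥Rb ≤ Cardinal.aleph.{1} 1 := by
      have : Countable ↥Rb := hRbc.to_subtype
      exact le_trans Cardinal.mk_le_aleph0 (Cardinal.aleph0_le_aleph 1)
    have h3 : #↥C0 ≤ Cardinal.aleph.{1} 1 := by
      refine le_trans (Cardinal.mk_union_le _ _) ?_
      have h4 : #↥(Sum.inl '' Set.Iio omega1 :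
          Set (Ordinal.{0} ⊕ Ordinal.{0} × Ordinal.{0})) ≤ Cardinal.aleph.{1} 1 := by
        refine le_trans Cardinal.mk_image_le ?_
        rw [mk_Iio_om1]
      have h5 : #↥(Sum.inr '' (Set.Iio omega1 ×ˢ Set.Iio omega1) :
          Set (Ordinal.{0} ⊕ Ordinal.{0} × Ordinal.{0})) ≤ Cardinal.aleph.{1} 1 := by
        refine le_trans Cardinal.mk_image_le ?_
        have := Cardinal.mk_congr (Equiv.Set.prod (Set.Iio omega1) (Set.Iio omega1))
        rw [this, Cardinal.mk_prod]
        simp only [Cardinal.lift_id]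
        rw [mk_Iio_om1, Cardinal.mul_eq_self (Cardinal.aleph0_le_aleph 1)]
      calc #↥(Sum.inl '' Set.Iio omega1 : Set (Ordinal.{0} ⊕ Ordinal.{0} × Ordinal.{0})) +
            #↥(Sum.inr '' (Set.Iio omega1 ×ˢ Set.Iio omega1) :
              Set (Ordinal.{0} ⊕ Ordinal.{0} × Ordinal.{0}))
          ≤ Cardinal.aleph.{1} 1 + Cardinal.aleph.{1} 1 := add_le_add h4 h5
        _ = Cardinal.aleph.{1} 1 := Cardinal.add_eq_self (Cardinal.aleph0_le_aleph 1)
    calc #↥Rb * #↥C0 ≤ Cardinal.aleph.{1} 1 * Cardinal.aleph.{1} 1 := mul_le_mul' h2 h3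
      _ = Cardinal.aleph.{1} 1 := Cardinal.mul_eq_self (Cardinal.aleph0_le_aleph 1)
  set WT : Type 1 := {t : Set D // t ⊆ G ∧ #↥t ≤ Cardinal.aleph0} with hWT
  have hWTcard : #WT ≤ Cardinal.aleph.{1} 1 := mk_ctble_bdd_le G hGcard hCH1
  set tr : PCond S → Set D := fun P => {z | code P z.1.1 z.2} with htr
  have htrG : ∀ P, tr P ⊆ G := by
    rintro P ⟨w, c⟩ hz
    exact ⟨Set.mem_univ _, code_bounded P w.1 hz⟩
  have htrc : ∀ P, (tr P).Countable := by
    intro P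
    have hsub : tr P ⊆ ⋃ (w : ↥Rb), (fun c => ((w, c) : D)) '' {c | code P w.1 c} := by
      rintro ⟨w, c⟩ hz
      exact Set.mem_iUnion.2 ⟨w, ⟨c, hz, rfl⟩⟩
    refine Set.Countable.mono hsub ?_
    have : Countable ↥Rb := hRbc.to_subtype
    exact Set.countable_iUnion (fun w => (code_countable P w.1).image _)
  set trf : ↥T → WT := fun ν => ⟨tr (pf ν.1), htrG _, by
    have : Countable ↥(tr (pf ν.1)) := (htrc _).to_subtype
    exact Cardinal.mk_le_aleph0⟩ with htrf
  -- pigeonhole: two indices with the same trace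
  have : ¬ Function.Injective trf := by
    intro hinj
    have := Cardinal.mk_le_of_injective hinj
    exact absurd (hTbig.trans (this.trans hWTcard)) (not_le.2 aleph1_lt_aleph2)
  obtain ⟨ν₁, ν₂, hfeq, hne⟩ := Function.not_injective_iff.1 this
  set μ := ν₁.1 with hμ
  set ν := ν₂.1 with hν
  have hμT : μ ∈ T := ν₁.2
  have hνT : ν ∈ T := ν₂.2
  have hμν : μ ≠ ν := fun h => hne (Subtype.ext h)
  have hμOm2 : μ < Om2 := hTsub hμT
  have hνOm2 : ν < Om2 := hTsub hνT
  set P : PCond S := pf μ with hP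
  set Q : PCond S := pf ν with hQ
  have hPQne : P ≠ Q := fun h => hμν (pfInj μ hμOm2 ν hνOm2 h)
  have htreq : tr P = tr Q := congrArg Subtype.val hfeq
  have hcode : ∀ w (hw : w ∈ Rb) c, code P w c ↔ code Q w c := by
    intro w hw c
    exact Set.ext_iff.1 htreq (⟨⟨w, hw⟩, c⟩ : D)
  -- common coordinates land in the root
  have hbPQ : ∀ w, w ∈ bset P → w ∈ bset Q → w ∈ Rb := by
    intro w hwP hwQ
    have hwU : w ∈ U := hbU μ hμOm2 hwP
    refine ⟨hwU, ?_⟩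
    have : jj w ∈ yy μ ∩ yy ν := ⟨Set.mem_image_of_mem jj hwP, Set.mem_image_of_mem jj hwQ⟩
    rw [hpair μ hμT ν hνT hμν] at this
    exact this
  -- the key coordinatewise equalities
  have key : ∀ θ (hp : θ ∈ P.dom) (hq : θ ∈ Q.dom),
      (P.val θ hp).ht = (Q.val θ hq).ht ∧
      (∀ x y, (P.val θ hp).tlt x y ↔ (Q.val θ hq).tlt x y) ∧
      (∀ α, α ∈ (P.val θ hp).u → α ∈ (Q.val θ hq).u →
        (P.val θ hp).eta α = (Q.val θ hq).eta α) := by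
    intro θ hp hq
    have hw : Sum.inl θ ∈ Rb := hbPQ _ (mem_bset_inl P hp) (mem_bset_inl Q hq)
    refine ⟨?_, ?_, ?_⟩
    · have h1 : code P (Sum.inl θ) (Sum.inl (P.val θ hp).ht) := ⟨hp, Or.inl rfl⟩
      obtain ⟨h', hc | ⟨x, y, hxy, _⟩⟩ := (hcode _ hw _).1 h1
      · exact Sum.inl.inj hc
      · exact absurd hxy (by simp)
    · intro x y
      constructor
      · intro hxy
        have h1 : code P (Sum.inl θ) (Sum.inr (x, y)) := ⟨hp, Or.inr ⟨x, y, rfl, hxy⟩⟩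
        obtain ⟨h', hc | ⟨x', y', hxy', ht'⟩⟩ := (hcode _ hw _).1 h1
        · exact absurd hc (by simp)
        · obtain ⟨hx, hy⟩ := Prod.mk.injEq .. ▸ Sum.inr.inj hxy'
          subst hx; subst hy; exact ht'
      · intro hxy
        have h1 : code Q (Sum.inl θ) (Sum.inr (x, y)) := ⟨hq, Or.inr ⟨x, y, rfl, hxy⟩⟩
        obtain ⟨h', hc | ⟨x', y', hxy', ht'⟩⟩ := (hcode _ hw _).2 h1
        · exact absurd hc (by simp)
        · obtain ⟨hx, hy⟩ := Prod.mk.injEq .. ▸ Sum.inr.inj hxy'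
          subst hx; subst hy; exact ht'
    · intro α hαP hαQ
      have hw2 : Sum.inr (θ, α) ∈ Rb :=
        hbPQ _ (mem_bset_inr P hp hαP) (mem_bset_inr Q hq hαQ)
      ext x
      constructor
      · intro hx
        have h1 : code P (Sum.inr (θ, α)) (Sum.inl x) := ⟨hp, x, rfl, hx⟩
        obtain ⟨h', x', hx', hmem⟩ := (hcode _ hw2 _).1 h1
        have : x = x' := Sum.inl.inj hx'
        subst this; exact hmem
      · intro hx
        have h1 : code Q (Sum.inr (θ, α)) (Sum.inl x) := ⟨hq, x, rfl, hx⟩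
        obtain ⟨h', x', hx', hmem⟩ := (hcode _ hw2 _).2 h1
        have : x = x' := Sum.inl.inj hx'
        subst this; exact hmem
  -- build the common extension
  set rr : PCond S :=
    ⟨P.dom ∪ Q.dom, Set.union_subset P.dom_sub Q.dom_sub, P.dom_count.union Q.dom_count,
      fun θ h =>
        if hp : θ ∈ P.dom then
          (if hq : θ ∈ Q.dom then
            QCond.merge (P.val θ hp) (Q.val θ hq) (key θ hp hq).1 (key θ hp hq).2.1
              (key θ hp hq).2.2
          else P.val θ hp)
        else Q.val θ (h.resolve_left hp)⟩ with hrr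
  have hrP : PCond.Le rr P := by
    refine ⟨Set.subset_union_left, ?_⟩
    intro θ h
    show QCond.Le (dite _ _ _) (P.val θ h)
    rw [dif_pos h]
    by_cases hq : θ ∈ Q.dom
    · rw [dif_pos hq]
      exact QCond.merge_le_left _ _ _ _ _
    · rw [dif_neg hq]
      exact QCond.le_refl _
  have hrQ : PCond.Le rr Q := by
    refine ⟨Set.subset_union_right, ?_⟩
    intro θ h
    show QCond.Le (dite _ _ _) (Q.val θ h)
    by_cases hp : θ ∈ P.dom
    · rw [dif_pos hp, dif_pos h]
      exact QCond.merge_le_right _ _ _ _ _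
    · rw [dif_neg hp]
      exact QCond.le_refl _
  exact hanti P (pfA μ hμOm2) Q (pfA ν hνOm2) hPQne ⟨rr, hrP, hrQ⟩
end
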